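/- arXiv:2104.01748 — 2 statements merged into one kernel-verified Lean document; each statement's English description precedes it below -/
import Mathlib

section
/- Let G ⊂ Ω be the set Ω ∩ B(x_g, (1+2δ_g)R_g), let z ∈ H¹(0,T; L²(G)) ∩ L²(0,T; H²(G) ∩ H₀¹(G)), and for λ > 0 set G_λ(x,t) = (T−t+λ)^{−n/2} exp(−|x−x_g|²/(4(T−t+λ))) and N_λ(t) = (∫_G |∇z(x,t)|² G_λ(x,t) dx) / (∫_G |z(x,t)|² G_λ(x,t) dx). Then for every t ∈ (0,T] and λ > 0 with ∫_G |z(x,t)|² G_λ(x,t) dx ≠ 0, one has (1/2)(d/dt)∫_G |z|² G_λ dx + N_λ(t) ∫_G |z|² G_λ dx = ∫_G z (∂ₜz − Δz) G_λ dx. -/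
open MeasureTheory Set ENNReal

noncomputable section

/-- `n`-dimensional Euclidean space. -/
abbrev Euc (n : ℕ) := EuclideanSpace ℝ (Fin n)

/-- Divergence of a vector field, computed with classical (Fréchet) derivatives. -/
def diverg {n : ℕ} (Φ : Euc n → Euc n) (x : Euc n) : ℝ :=
  ∑ i, fderiv ℝ (fun y => Φ y i) x (EuclideanSpace.single i 1)

/-- Laplacian of a scalar function, as divergence of the gradient. -/
def lapl {n : ℕ} (f : Euc n → ℝ) (x : Euc n) : ℝ :=
  diverg (fun y => gradient f y) x

/-- The backward Gaussian weight
`G_λ(x,t) = (T−t+λ)^{−n/2} exp(−|x−x_g|²/(4(T−t+λ)))`. -/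
def Gweight {n : ℕ} (xg : Euc n) (T lam : ℝ) (x : Euc n) (t : ℝ) : ℝ :=
  (T - t + lam) ^ (-(n:ℝ) / 2) * Real.exp (-‖x - xg‖ ^ 2 / (4 * (T - t + lam)))

/-- The localized frequency function
`N_λ(t) = (∫_G |∇z|² G_λ dx) / (∫_G |z|² G_λ dx)`. -/
def Nfreq {n : ℕ} (G : Set (Euc n)) (xg : Euc n) (T lam : ℝ)
    (z : ℝ → Euc n → ℝ) (t : ℝ) : ℝ :=
  (∫ x in G, ‖gradient (z t) x‖ ^ 2 * Gweight xg T lam x t) /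
    (∫ x in G, (z t x) ^ 2 * Gweight xg T lam x t)

section Helpers


lemma sInf_not_mem_of_isOpen {C : Set ℝ} (hC : IsOpen C) (hb : BddBelow C) : sInf C ∉ C := by
  intro h
  obtain ⟨ε, hε, hball⟩ := Metric.isOpen_iff.1 hC _ h
  have : sInf C - ε / 2 ∈ C := by
    apply hball
    simp [Real.dist_eq, abs_of_nonpos, hε.le]
    rw [abs_of_pos] <;> linarith
  have := csInf_le hb this
  linarith

lemma sSup_not_mem_of_isOpen {C : Set ℝ} (hC : IsOpen C) (hb : BddAbove C) : sSup C ∉ C := by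
  intro h
  obtain ⟨ε, hε, hball⟩ := Metric.isOpen_iff.1 hC _ h
  have : sSup C + ε / 2 ∈ C := by
    apply hball
    simp [Real.dist_eq]
    rw [abs_of_pos] <;> linarith
  have := le_csSup hb this
  linarith

lemma open_bounded_preconnected_eq_Ioo {C : Set ℝ} (hC : IsOpen C)
    (hbd : Bornology.IsBounded C) (hconn : IsPreconnected C) (hne : C.Nonempty) :
    C = Ioo (sInf C) (sSup C) ∧ sInf C < sSup C := by
  have hbb : BddBelow C := hbd.bddBelow
  have hba : BddAbove C := hbd.bddAbove
  have hI := hconn.mem_intervals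
  have hinf := sInf_not_mem_of_isOpen hC hbb
  have hsup := sSup_not_mem_of_isOpen hC hba
  simp only [mem_insert_iff, mem_singleton_iff] at hI
  set a := sInf C with ha
  set b := sSup C with hb2
  rcases hI with h | h | h | h | h | h | h | h | h | h
  · exfalso; rw [h] at hne; exact hinf (by rw [h]; exact ⟨le_refl _, (nonempty_Icc.1 hne)⟩)
  · exfalso; rw [h] at hne; exact hinf (by rw [h]; exact ⟨le_refl _, (nonempty_Ico.1 hne)⟩)
  · exfalso; rw [h] at hne; exact hsup (by rw [h]; exact ⟨(nonempty_Ioc.1 hne), le_refl _⟩)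
  · refine ⟨h, ?_⟩; rw [h] at hne; exact nonempty_Ioo.1 hne
  · exfalso; rw [h] at hba; exact (not_bddAbove_Ici _) hba
  · exfalso; rw [h] at hba; exact (not_bddAbove_Ioi _) hba
  · exfalso; rw [h] at hbb; exact (not_bddBelow_Iic _) hbb
  · exfalso; rw [h] at hbb; exact (not_bddBelow_Iio _) hbb
  · exfalso; rw [h] at hba; exact (not_bddAbove_univ) hba
  · rw [h] at hne; exact absurd hne (by simp)

lemma integral_deriv_open_bounded (U : Set ℝ) (hU : IsOpen U)
    (hb : Bornology.IsBounded U) (f : ℝ → ℝ)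
    (hfd : Differentiable ℝ f) (hfc : Continuous (deriv f))
    (h0 : ∀ x ∈ frontier U, f x = 0) : ∫ x in U, deriv f x = 0 := by
  classical
  -- integrability
  obtain ⟨R, hR⟩ := hb.subset_closedBall 0
  have hint : IntegrableOn (deriv f) U := by
    exact (hfc.continuousOn.integrableOn_compact (isCompact_closedBall 0 R)).mono_set hR
  -- the components
  set S : Set (Set ℝ) := {C | ∃ x ∈ U, C = connectedComponentIn U x} with hS
  have hopen : ∀ C ∈ S, IsOpen C := by
    rintro C ⟨x, hx, rfl⟩; exact hU.connectedComponentIn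
  have hne : ∀ C ∈ S, C.Nonempty := by
    rintro C ⟨x, hx, rfl⟩; exact ⟨x, mem_connectedComponentIn hx⟩
  have hsub : ∀ C ∈ S, C ⊆ U := by
    rintro C ⟨x, hx, rfl⟩; exact connectedComponentIn_subset _ _
  have hdisj : S.PairwiseDisjoint id := by
    rintro C ⟨x, hx, rfl⟩ D ⟨y, hy, rfl⟩ hne'
    by_contra hcon
    obtain ⟨z, hz1, hz2⟩ := Set.not_disjoint_iff.1 hcon
    exact hne' ((connectedComponentIn_eq hz1).trans (connectedComponentIn_eq hz2).symm)
  have hcount : S.Countable :=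
    Set.PairwiseDisjoint.countable_of_isOpen hdisj hopen hne
  have hUnion : ⋃₀ S = U := by
    apply subset_antisymm
    · exact sUnion_subset hsub
    · intro x hx
      exact ⟨connectedComponentIn U x, ⟨x, hx, rfl⟩, mem_connectedComponentIn hx⟩
  haveI : Countable ↥S := hcount.to_subtype
  have key : ∀ C ∈ S, ∫ x in C, deriv f x = 0 := by
    rintro C hC
    have hCo := hopen C hC
    have hCb : Bornology.IsBounded C := hb.subset (hsub C hC)
    have hCc : IsPreconnected C := by
      obtain ⟨x, hx, rfl⟩ := hC; exact isPreconnected_connectedComponentIn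
    obtain ⟨hIoo, hlt⟩ := open_bounded_preconnected_eq_Ioo hCo hCb hCc (hne C hC)
    set a := sInf C; set b := sSup C
    -- a and b are in the frontier of U
    have hfr : ∀ c ∈ ({a, b} : Set ℝ), c ∈ closure U → c ∉ U → c ∈ frontier U := by
      intro c _ h1 h2
      rw [frontier, hU.interior_eq]; exact ⟨h1, h2⟩
    have haU : a ∉ U := by
      intro haU
      obtain ⟨ε, hε, hball⟩ := Metric.isOpen_iff.1 hU _ haU
      obtain ⟨x₀, hx₀⟩ := hne C hC
      have hT : Ioo (a - ε) b ⊆ U := by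
        intro y hy
        rcases lt_or_ge y (a + ε) with h | h
        · refine hball ?_
          simp only [Metric.mem_ball, Real.dist_eq]
          rw [abs_lt]; constructor <;> linarith [hy.1, hy.2]
        · have : y ∈ C := by rw [hIoo]; exact ⟨by linarith, hy.2⟩
          exact hsub C hC this
      have hTC : Ioo (a - ε) b ⊆ C := by
        have hx₀T : x₀ ∈ Ioo (a - ε) b := by
          rw [hIoo] at hx₀; exact ⟨by linarith [hx₀.1], hx₀.2⟩
        have := isPreconnected_Ioo.subset_connectedComponentIn hx₀T hT
        obtain ⟨x, hx, rfl⟩ := hC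
        rwa [← connectedComponentIn_eq hx₀] at this
      have : a - ε / 2 ∈ C := hTC ⟨by linarith, by linarith⟩
      rw [hIoo] at this; linarith [this.1]
    have hbU : b ∉ U := by
      intro hbU
      obtain ⟨ε, hε, hball⟩ := Metric.isOpen_iff.1 hU _ hbU
      obtain ⟨x₀, hx₀⟩ := hne C hC
      have hT : Ioo a (b + ε) ⊆ U := by
        intro y hy
        rcases lt_or_ge (b - ε) y with h | h
        · refine hball ?_
          simp only [Metric.mem_ball, Real.dist_eq]
          rw [abs_lt]; constructor <;> linarith [hy.1, hy.2]
        · have : y ∈ C := by rw [hIoo]; exact ⟨hy.1, by linarith⟩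
          exact hsub C hC this
      have hTC : Ioo a (b + ε) ⊆ C := by
        have hx₀T : x₀ ∈ Ioo a (b + ε) := by
          rw [hIoo] at hx₀; exact ⟨hx₀.1, by linarith [hx₀.2]⟩
        have := isPreconnected_Ioo.subset_connectedComponentIn hx₀T hT
        obtain ⟨x, hx, rfl⟩ := hC
        rwa [← connectedComponentIn_eq hx₀] at this
      have : b + ε / 2 ∈ C := hTC ⟨by linarith, by linarith⟩
      rw [hIoo] at this; linarith [this.2]
    have hacl : a ∈ closure U := by
      have : a ∈ closure C := by
        rw [hIoo, closure_Ioo hlt.ne]; exact ⟨le_refl _, hlt.le⟩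
      exact closure_mono (hsub C hC) this
    have hbcl : b ∈ closure U := by
      have : b ∈ closure C := by
        rw [hIoo, closure_Ioo hlt.ne]; exact ⟨hlt.le, le_refl _⟩
      exact closure_mono (hsub C hC) this
    have hfa : f a = 0 := h0 a (hfr a (by simp) hacl haU)
    have hfb : f b = 0 := h0 b (hfr b (by simp) hbcl hbU)
    rw [hIoo, ← integral_Ioc_eq_integral_Ioo, ← intervalIntegral.integral_of_le hlt.le,
      intervalIntegral.integral_deriv_eq_sub (fun x _ => hfd x)
        (hfc.intervalIntegrable a b), hfa, hfb, sub_zero]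
  calc ∫ x in U, deriv f x = ∫ x in ⋃₀ S, deriv f x := by rw [hUnion]
    _ = ∫ x in ⋃ (C : S), (C : Set ℝ), deriv f x := by rw [sUnion_eq_iUnion]
    _ = ∑' (C : S), ∫ x in (C : Set ℝ), deriv f x := by
        apply integral_iUnion
        · exact fun C => (hopen C C.2).measurableSet
        · intro C D hCD
          exact hdisj C.2 D.2 (fun h => hCD (Subtype.ext h))
        · rw [← sUnion_eq_iUnion, hUnion]; exact hint
    _ = ∑' (_ : S), (0:ℝ) := tsum_congr (fun C => key C C.2)
    _ = 0 := tsum_zero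

instance uniqueEqSubtype {n : ℕ} (i : Fin n) : Unique {j : Fin n // j = i} :=
  ⟨⟨⟨i, rfl⟩⟩, fun x => Subtype.ext x.2⟩

section slice
variable {n : ℕ} (i : Fin n)

def sliceEquiv (i : Fin n) : Euc n ≃ᵐ (ℝ × ({j : Fin n // ¬ j = i} → ℝ)) :=
  (MeasurableEquiv.toLp 2 (Fin n → ℝ)).symm.trans
    ((MeasurableEquiv.piEquivPiSubtypeProd (fun _ : Fin n => ℝ) (fun j => j = i)).trans
      (MeasurableEquiv.prodCongr (MeasurableEquiv.funUnique {j : Fin n // j = i} ℝ)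
        (MeasurableEquiv.refl _)))

lemma sliceEquiv_preserving : MeasurePreserving (sliceEquiv (n := n) i) volume volume := by
  have h0 := EuclideanSpace.volume_preserving_symm_measurableEquiv_toLp (Fin n)
  have h1 := volume_preserving_piEquivPiSubtypeProd (fun _ : Fin n => ℝ) (fun j => j = i)
  have h2 : MeasurePreserving
      (Prod.map (⇑(MeasurableEquiv.funUnique {j : Fin n // j = i} ℝ))
        (id : ({j : Fin n // ¬ j = i} → ℝ) → ({j : Fin n // ¬ j = i} → ℝ)))
      ((volume : Measure ({j : Fin n // j = i} → ℝ)).prod volume)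
      ((volume : Measure ℝ).prod volume) :=
    (volume_preserving_funUnique {j : Fin n // j = i} ℝ).prod (MeasurePreserving.id _)
  rw [Measure.volume_eq_prod] at h1
  rw [show (Subtype.fintype fun j : Fin n => j = i) = Fintype.subtypeEq i from Subsingleton.elim _ _] at h1
  rw [sliceEquiv, MeasurableEquiv.coe_trans, MeasurableEquiv.coe_trans]
  have h2' : MeasurePreserving
      (⇑(MeasurableEquiv.prodCongr (MeasurableEquiv.funUnique {j : Fin n // j = i} ℝ)
        (MeasurableEquiv.refl ({j : Fin n // ¬ j = i} → ℝ))))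
      ((volume : Measure ({j : Fin n // j = i} → ℝ)).prod volume)
      ((volume : Measure ℝ).prod volume) := h2
  exact (h2'.comp h1).comp h0

lemma sliceEquiv_symm_explicit (w : {j : Fin n // ¬ j = i} → ℝ) (y : ℝ) :
    (sliceEquiv i).symm (y, w) = WithLp.toLp 2 (fun j => if h : j = i then y else w ⟨j, h⟩ : Fin n → ℝ) := by
  have key : (sliceEquiv i) (WithLp.toLp 2 (fun j => if h : j = i then y else w ⟨j, h⟩ : Fin n → ℝ)) = (y, w) := by
    refine Prod.ext ?_ ?_
    · show (fun j => if h : j = i then y else w ⟨j, h⟩ : Fin n → ℝ) i = y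
      simp
    · funext j
      show (fun j => if h : j = i then y else w ⟨j, h⟩ : Fin n → ℝ) ↑j = w j
      simp [j.2]
  calc (sliceEquiv i).symm (y, w)
      = (sliceEquiv i).symm ((sliceEquiv i)
          (WithLp.toLp 2 (fun j => if h : j = i then y else w ⟨j, h⟩ : Fin n → ℝ))) := by rw [key]
    _ = _ := (sliceEquiv i).symm_apply_apply _

lemma sliceEquiv_symm_apply (w : {j : Fin n // ¬ j = i} → ℝ) (y : ℝ) :
    (sliceEquiv i).symm (y, w) =
      (sliceEquiv i).symm (0, w) + y • (EuclideanSpace.single i (1:ℝ)) := by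
  rw [sliceEquiv_symm_explicit, sliceEquiv_symm_explicit]
  apply PiLp.ext
  intro j
  rw [PiLp.add_apply, PiLp.smul_apply, EuclideanSpace.single_apply]
  by_cases h : j = i
  · subst h; simp
  · simp [h]
end slice

theorem diverg_slice_zero {n : ℕ} (F : Euc n → Euc n) (hF : ContDiff ℝ 1 F)
    (U : Set (Euc n)) (hU : IsOpen U) (hUb : Bornology.IsBounded U)
    (h0 : ∀ x ∈ frontier U, F x = 0) (i : Fin n) :
    ∫ x in U, fderiv ℝ (fun y => F y i) x (EuclideanSpace.single i 1) = 0 := by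
  classical
  obtain ⟨R, hR⟩ := hUb.subset_closedBall 0
  have hFi : ContDiff ℝ 1 (fun y => F y i) :=
    (EuclideanSpace.proj (𝕜 := ℝ) i).contDiff.comp hF
  set g : Euc n → ℝ := fun x => fderiv ℝ (fun y => F y i) x (EuclideanSpace.single i 1) with hg
  have hgc : Continuous g :=
    (hFi.continuous_fderiv one_ne_zero).clm_apply continuous_const
  have hgint : IntegrableOn g U := by
    exact (hgc.continuousOn.integrableOn_compact (isCompact_closedBall 0 R)).mono_set hR
  have hindint : Integrable (U.indicator g) :=
    (integrable_indicator_iff hU.measurableSet).2 hgint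
  set Φ := sliceEquiv i with hΦ
  have hpres : MeasurePreserving Φ volume volume := sliceEquiv_preserving i
  have hpres' : MeasurePreserving Φ.symm volume volume := hpres.symm Φ
  have hcomp : ∫ p : ℝ × ({j : Fin n // ¬ j = i} → ℝ), U.indicator g (Φ.symm p)
      = ∫ x, U.indicator g x :=
    hpres'.integral_comp Φ.symm.measurableEmbedding _
  have hcint : Integrable (fun p : ℝ × ({j : Fin n // ¬ j = i} → ℝ) => U.indicator g (Φ.symm p)) :=
    (hpres'.integrable_comp_emb Φ.symm.measurableEmbedding).2 hindint
  rw [← integral_indicator hU.measurableSet, ← hcomp,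
    show (volume : Measure (ℝ × ({j : Fin n // ¬ j = i} → ℝ))) = (volume).prod volume from rfl,
    integral_prod_symm _ hcint]
  -- inner integral vanishes for every w
  have inner0 : ∀ w : {j : Fin n // ¬ j = i} → ℝ,
      ∫ y : ℝ, U.indicator g (Φ.symm (y, w)) = 0 := by
    intro w
    set m : ℝ → Euc n := fun y => Φ.symm (y, w) with hm
    have hmf : ∀ y, m y = m 0 + y • EuclideanSpace.single i (1:ℝ) := by
      intro y; exact sliceEquiv_symm_apply i w y
    have hmd : ∀ y, HasDerivAt m (EuclideanSpace.single i (1:ℝ)) y := by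
      intro y
      have : HasDerivAt (fun y : ℝ => m 0 + y • EuclideanSpace.single i (1:ℝ))
          ((1:ℝ) • EuclideanSpace.single i (1:ℝ)) y :=
        ((hasDerivAt_id y).smul_const _).const_add _
      rw [one_smul] at this
      exact this.congr_of_eventuallyEq (Filter.Eventually.of_forall fun y => (hmf y))
    have hmc : Continuous m := by
      have : Continuous (fun y : ℝ => m 0 + y • EuclideanSpace.single i (1:ℝ)) :=
        continuous_const.add (continuous_id.smul continuous_const)
      exact this.congr fun y => (hmf y).symm
    set U' : Set ℝ := m ⁻¹' U with hU'
    have hU'o : IsOpen U' := hU.preimage hmc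
    have hU'b : Bornology.IsBounded U' := by
      refine (Metric.isBounded_closedBall (x := (0:ℝ)) (r := R + ‖m 0‖)).subset ?_
      intro y hy
      have h1 : ‖m y‖ ≤ R := by
        have := hR hy; rwa [Metric.mem_closedBall, dist_zero_right] at this
      have h2 : |y| = ‖m y - m 0‖ := by
        rw [hmf y]; simp [norm_smul, EuclideanSpace.norm_single]
      have : |y| ≤ R + ‖m 0‖ := by
        rw [h2]
        calc ‖m y - m 0‖ ≤ ‖m y‖ + ‖m 0‖ := norm_sub_le _ _
          _ ≤ R + ‖m 0‖ := by linarith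
      simpa [Metric.mem_closedBall, Real.dist_eq] using this
    set fw : ℝ → ℝ := fun y => F (m y) i with hfw
    have hfwd : ∀ y, HasDerivAt fw (g (m y)) y := by
      intro y
      have h1 : HasFDerivAt (fun x => F x i) (fderiv ℝ (fun x => F x i) (m y)) (m y) :=
        (hFi.differentiable one_ne_zero (m y)).hasFDerivAt
      exact h1.comp_hasDerivAt y (hmd y)
    have hderiv : deriv fw = fun y => g (m y) := by
      funext y; exact (hfwd y).deriv
    have hfr : ∀ y ∈ frontier U', fw y = 0 := by
      intro y hy
      have h1 : m y ∈ closure U := by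
        have := hy.1
        have h2 : closure U' ⊆ m ⁻¹' closure U := hmc.closure_preimage_subset U
        exact h2 this
      have h2 : m y ∉ U := by
        intro hc
        exact hy.2 (by rwa [hU'o.interior_eq])
      have : m y ∈ frontier U := by rw [frontier, hU.interior_eq]; exact ⟨h1, h2⟩
      have := h0 _ this
      simp only [hfw, this]
      rfl
    have key := integral_deriv_open_bounded U' hU'o hU'b fw
      (fun y => (hfwd y).differentiableAt)
      (by rw [hderiv]; exact hgc.comp hmc) hfr
    calc ∫ y : ℝ, U.indicator g (Φ.symm (y, w))
        = ∫ y : ℝ, U'.indicator (g ∘ m) y := by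
          refine integral_congr_ae (Filter.Eventually.of_forall fun y => ?_)
          exact (Set.indicator_comp_right m).symm
      _ = ∫ y in U', g (m y) := integral_indicator hU'o.measurableSet
      _ = ∫ y in U', deriv fw y := by
          refine setIntegral_congr_fun hU'o.measurableSet ?_
          intro y _; rw [hderiv]
      _ = 0 := key
  have : (fun w : {j : Fin n // ¬ j = i} → ℝ => ∫ y : ℝ, U.indicator g (Φ.symm (y, w)))
      = fun _ => (0:ℝ) := funext inner0
  rw [this, integral_zero]

theorem diverg_integral_zero {n : ℕ} (F : Euc n → Euc n) (hF : ContDiff ℝ 1 F)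
    (U : Set (Euc n)) (hU : IsOpen U) (hUb : Bornology.IsBounded U)
    (h0 : ∀ x ∈ frontier U, F x = 0) :
    ∫ x in U, diverg F x = 0 := by
  obtain ⟨R, hR⟩ := hUb.subset_closedBall 0
  have hint : ∀ i : Fin n, IntegrableOn
      (fun x => fderiv ℝ (fun y => F y i) x (EuclideanSpace.single i 1)) U := by
    intro i
    have hFi : ContDiff ℝ 1 (fun y => F y i) :=
      (EuclideanSpace.proj (𝕜 := ℝ) i).contDiff.comp hF
    have hgc : Continuous fun x => fderiv ℝ (fun y => F y i) x (EuclideanSpace.single i 1) :=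
      (hFi.continuous_fderiv one_ne_zero).clm_apply continuous_const
    exact (hgc.continuousOn.integrableOn_compact (isCompact_closedBall 0 R)).mono_set hR
  unfold diverg
  rw [integral_finset_sum _ (fun i _ => hint i)]
  exact Finset.sum_eq_zero fun i _ => diverg_slice_zero F hF U hU hUb h0 i

/-- time derivative of the Gaussian weight -/
lemma gweight_hasDerivAt_time {n : ℕ} (xg : Euc n) (T lam : ℝ) (x : Euc n) (s : ℝ)
    (hs : 0 < T - s + lam) :
    HasDerivAt (fun u => Gweight xg T lam x u)
      (Gweight xg T lam x s *
        ((n : ℝ) / (2 * (T - s + lam)) - ‖x - xg‖ ^ 2 / (4 * (T - s + lam) ^ 2))) s := by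
  set r2 : ℝ := ‖x - xg‖ ^ 2 with hr2
  have ha : HasDerivAt (fun u : ℝ => T - u + lam) (-1) s := by
    simpa using ((hasDerivAt_id s).const_sub T).add_const lam
  have h1 : HasDerivAt (fun u : ℝ => (T - u + lam) ^ (-(n:ℝ)/2))
      ((-1) * (-(n:ℝ)/2) * (T - s + lam) ^ ((-(n:ℝ)/2) - 1)) s :=
    ha.rpow_const (Or.inl hs.ne')
  have h2 : HasDerivAt (fun u : ℝ => -r2 / (4 * (T - u + lam)))
      ((0 * (4 * (T - s + lam)) - (-r2) * (4 * (-1))) / (4 * (T - s + lam)) ^ 2) s := by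
    have h4 : HasDerivAt (fun u : ℝ => 4 * (T - u + lam)) (4 * (-1)) s := ha.const_mul 4
    exact (hasDerivAt_const s (-r2)).div h4 (by positivity)
  have h3 : HasDerivAt (fun u : ℝ => Real.exp (-r2 / (4 * (T - u + lam))))
      (Real.exp (-r2 / (4 * (T - s + lam))) *
        ((0 * (4 * (T - s + lam)) - (-r2) * (4 * (-1))) / (4 * (T - s + lam)) ^ 2)) s :=
    h2.exp
  have := h1.mul h3
  refine this.congr_deriv ?_
  rw [Gweight, Real.rpow_sub_one hs.ne']
  field_simp
  ring

lemma gweight_eq_inner {n : ℕ} (xg : Euc n) (T lam : ℝ) (t : ℝ) :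
    (fun y : Euc n => Gweight xg T lam y t) =
      (fun y : Euc n => (T - t + lam) ^ (-(n:ℝ)/2) *
        Real.exp (-(4 * (T - t + lam))⁻¹ * (inner ℝ (y - xg) (y - xg) : ℝ))) := by
  funext y
  rw [Gweight, real_inner_self_eq_norm_sq,
    show -‖y - xg‖^2/(4*(T - t + lam)) = -(4*(T - t + lam))⁻¹ * ‖y - xg‖^2 from by ring]

lemma gweight_contDiff {n : ℕ} (xg : Euc n) (T lam : ℝ) (t : ℝ) :
    ContDiff ℝ 1 (fun y : Euc n => Gweight xg T lam y t) := by
  rw [gweight_eq_inner]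
  refine contDiff_const.mul ?_
  refine (Real.contDiff_exp.of_le le_top).comp ?_
  refine contDiff_const.mul ?_
  exact (contDiff_id.sub contDiff_const).inner ℝ (contDiff_id.sub contDiff_const)

lemma gweight_hasFDerivAt {n : ℕ} (xg : Euc n) (T lam : ℝ) (t : ℝ) (x : Euc n)
    (hs : 0 < T - t + lam) :
    HasFDerivAt (fun y : Euc n => Gweight xg T lam y t)
      ((Gweight xg T lam x t * (-(2 * (T - t + lam))⁻¹)) • (innerSL ℝ (x - xg))) x := by
  have hsub : HasFDerivAt (fun y : Euc n => y - xg)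
      (ContinuousLinearMap.id ℝ (Euc n)) x := (hasFDerivAt_id x).sub_const xg
  have hq := hsub.inner ℝ hsub
  have hin := hq.const_mul (-(4 * (T - t + lam))⁻¹)
  have hexp := hin.exp
  have hful := hexp.const_mul ((T - t + lam) ^ (-(n:ℝ)/2))
  rw [← gweight_eq_inner] at hful
  refine hful.congr_fderiv ?_
  refine ContinuousLinearMap.ext fun v => ?_
  simp only [ContinuousLinearMap.smul_apply, ContinuousLinearMap.comp_apply,
    fderivInnerCLM_apply, ContinuousLinearMap.prod_apply, ContinuousLinearMap.id_apply,
    innerSL_apply_apply, smul_eq_mul, Gweight, real_inner_self_eq_norm_sq]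
  rw [real_inner_comm v (x - xg)]
  field_simp
  ring

lemma fderiv_apply_single {n : ℕ} (f : Euc n → ℝ) (x : Euc n) (i : Fin n) :
    fderiv ℝ f x (EuclideanSpace.single i (1:ℝ)) = gradient f x i := by
  have h := InnerProductSpace.toDual_symm_apply (𝕜 := ℝ) (E := Euc n)
    (x := EuclideanSpace.single i (1:ℝ)) (y := fderiv ℝ f x)
  rw [show gradient f x = (InnerProductSpace.toDual ℝ (Euc n)).symm (fderiv ℝ f x) from rfl]
  rw [← h, EuclideanSpace.inner_single_right]
  simp

lemma euc_sum_mul_self {n : ℕ} (u : Euc n) : ∑ i, u i * u i = ‖u‖ ^ 2 := by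
  rw [← real_inner_self_eq_norm_sq, PiLp.inner_apply]
  simp [RCLike.inner_apply, starRingEnd_apply, sq]

lemma gradient_contDiff {n : ℕ} (w : Euc n → ℝ) (hw : ContDiff ℝ 2 w) :
    ContDiff ℝ 1 (fun y => gradient w y) := by
  have h1 : ContDiff ℝ 1 (fderiv ℝ w) := hw.fderiv_right (by norm_num)
  exact ((InnerProductSpace.toDual ℝ (Euc n)).symm.contDiff).comp h1

lemma divF_eq {n : ℕ} (xg : Euc n) (T lam t : ℝ) (hs : 0 < T - t + lam)
    (w : Euc n → ℝ) (hw : ContDiff ℝ 2 w) (x : Euc n) :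
    diverg (fun y => (2 * w y * Gweight xg T lam y t) • gradient w y
        + (w y * w y * Gweight xg T lam y t * (2 * (T - t + lam))⁻¹) • (y - xg)) x
      = 2 * Gweight xg T lam x t * ‖gradient w x‖ ^ 2
        + 2 * w x * Gweight xg T lam x t * lapl w x
        + w x * w x * (Gweight xg T lam x t *
            ((n : ℝ) / (2 * (T - t + lam)) - ‖x - xg‖ ^ 2 / (4 * (T - t + lam) ^ 2))) := by
  have hwd : Differentiable ℝ w := hw.differentiable (by norm_num)
  have hgradC := gradient_contDiff w hw
  have hw' : HasFDerivAt w (fderiv ℝ w x) x := (hwd x).hasFDerivAt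
  have hGw' := gweight_hasFDerivAt xg T lam t x hs
  have hcomp : ∀ i : Fin n,
      fderiv ℝ (fun y =>
        ((2 * w y * Gweight xg T lam y t) • gradient w y
          + (w y * w y * Gweight xg T lam y t * (2 * (T - t + lam))⁻¹) • (y - xg)) i) x
        (EuclideanSpace.single i 1)
      = 2 * w x * Gweight xg T lam x t *
            (fderiv ℝ (fun y => gradient w y i) x (EuclideanSpace.single i 1))
        + 2 * Gweight xg T lam x t * (gradient w x i * gradient w x i)
        + w x * w x * Gweight xg T lam x t * (2 * (T - t + lam))⁻¹
        - (2 * (T - t + lam))⁻¹ * (2 * (T - t + lam))⁻¹ *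
            (w x * w x * Gweight xg T lam x t) * ((x - xg) i * (x - xg) i) := by
    intro i
    have hgi : HasFDerivAt (fun y => gradient w y i)
        (fderiv ℝ (fun y => gradient w y i) x) x := by
      refine DifferentiableAt.hasFDerivAt ?_
      have : Differentiable ℝ (fun y => gradient w y i) :=
        fun y => ((EuclideanSpace.proj (𝕜 := ℝ) i).differentiable.comp
          (hgradC.differentiable one_ne_zero)) y
      exact this x
    have hyi : HasFDerivAt (fun y : Euc n => (EuclideanSpace.proj (𝕜 := ℝ) i) y - xg i)
        ((EuclideanSpace.proj (𝕜 := ℝ) i) : Euc n →L[ℝ] ℝ) x :=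
      ((EuclideanSpace.proj (𝕜 := ℝ) i).hasFDerivAt).sub_const (xg i)
    have hterm : HasFDerivAt (fun y =>
        (2 * w y * Gweight xg T lam y t) * gradient w y i
          + (w y * w y * Gweight xg T lam y t * (2 * (T - t + lam))⁻¹) *
            ((EuclideanSpace.proj (𝕜 := ℝ) i) y - xg i)) _ x :=
      ((((hw'.const_mul 2).mul hGw').mul hgi).add
        ((((hw'.mul hw').mul hGw').mul_const ((2 * (T - t + lam))⁻¹)).mul hyi))
    have hfun : (fun y : Euc n =>
        ((2 * w y * Gweight xg T lam y t) • gradient w y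
          + (w y * w y * Gweight xg T lam y t * (2 * (T - t + lam))⁻¹) • (y - xg)) i)
        = (fun y => (2 * w y * Gweight xg T lam y t) * gradient w y i
          + (w y * w y * Gweight xg T lam y t * (2 * (T - t + lam))⁻¹) *
            ((EuclideanSpace.proj (𝕜 := ℝ) i) y - xg i)) := by
      funext y
      simp [PiLp.add_apply, PiLp.smul_apply, PiLp.sub_apply, smul_eq_mul,
        PiLp.proj_apply]
    rw [hfun, hterm.fderiv]
    simp only [ContinuousLinearMap.add_apply, ContinuousLinearMap.smul_apply,
      ContinuousLinearMap.comp_apply, ContinuousLinearMap.coe_coe, smul_eq_mul,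
      innerSL_apply_apply, PiLp.proj_apply, PiLp.sub_apply,
      EuclideanSpace.inner_single_right, map_one, EuclideanSpace.single_apply,
      starRingEnd_apply, star_trivial, if_pos, Pi.mul_apply, Pi.pow_apply]
    rw [show (fderiv ℝ w x) (EuclideanSpace.single i 1) = gradient w x i from
      fderiv_apply_single w x i]
    ring
  have hdiv : diverg (fun y => (2 * w y * Gweight xg T lam y t) • gradient w y
        + (w y * w y * Gweight xg T lam y t * (2 * (T - t + lam))⁻¹) • (y - xg)) x
      = ∑ i : Fin n, (2 * w x * Gweight xg T lam x t *
            (fderiv ℝ (fun y => gradient w y i) x (EuclideanSpace.single i 1))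
        + 2 * Gweight xg T lam x t * (gradient w x i * gradient w x i)
        + w x * w x * Gweight xg T lam x t * (2 * (T - t + lam))⁻¹
        - (2 * (T - t + lam))⁻¹ * (2 * (T - t + lam))⁻¹ *
            (w x * w x * Gweight xg T lam x t) * ((x - xg) i * (x - xg) i)) := by
    unfold diverg
    exact Finset.sum_congr rfl fun i _ => hcomp i
  rw [hdiv]
  have hlapl : lapl w x = ∑ i : Fin n,
      fderiv ℝ (fun y => gradient w y i) x (EuclideanSpace.single i 1) := rfl
  simp only [Finset.sum_sub_distrib, Finset.sum_add_distrib, ← Finset.mul_sum,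
    Finset.sum_const, Finset.card_univ, Fintype.card_fin, nsmul_eq_mul]
  rw [euc_sum_mul_self (x - xg), euc_sum_mul_self (gradient w x), ← hlapl]
  field_simp
  ring

end Helpers

set_option maxHeartbeats 1000000 in
/-- Lemma 3.1 (i): for `t ∈ (0,T]` and `λ > 0` with
`∫_G |z|²G_λ dx ≠ 0`,
`(1/2)(d/dt)∫_G |z|²G_λ dx + N_λ(t)∫_G |z|²G_λ dx = ∫_G z(∂ₜz − Δz)G_λ dx`. -/
theorem frequency_function_derivative_identity
    {n : ℕ} (hn : 1 ≤ n) (Ω : Set (Euc n))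
    (hΩo : IsOpen Ω) (hΩb : Bornology.IsBounded Ω) (hΩc : IsConnected Ω)
    (g xg : Euc n) (Rg δg : ℝ)
    (hg : g ∈ frontier Ω) (hxg : xg ∈ Ω) (hRg : 0 < Rg) (hδg : δg ∈ Set.Ioc (0:ℝ) 1)
    (hball : dist g xg < Rg)
    (G : Set (Euc n)) (hG : G = Ω ∩ Metric.ball xg ((1 + 2 * δg) * Rg))
    (hstar : StarConvex ℝ xg G)
    (T : ℝ) (hT : 0 < T)
    (z : ℝ → Euc n → ℝ)
    -- regularity of `z` (a classical strengthening of
    -- `z ∈ H¹(0,T;L²(G)) ∩ L²(0,T;H²(G)∩H₀¹(G))`)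
    (hz : ContDiff ℝ 2 (Function.uncurry z))
    (hzbc : ∀ t ∈ Set.Icc (0:ℝ) T, ∀ x ∈ frontier G, z t x = 0) :
    ∀ lam > (0:ℝ), ∀ t ∈ Set.Ioc (0:ℝ) T,
      (∫ x in G, (z t x) ^ 2 * Gweight xg T lam x t) ≠ 0 →
      HasDerivAt (fun s => ∫ x in G, (z s x) ^ 2 * Gweight xg T lam x s)
        (2 * ((∫ x in G,
            z t x * (deriv (fun s => z s x) t - lapl (z t) x) * Gweight xg T lam x t)
          - Nfreq G xg T lam z t * (∫ x in G, (z t x) ^ 2 * Gweight xg T lam x t))) t := by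
  intro lam hlam t ht hne
  -- geometry of G
  have hGo : IsOpen G := by rw [hG]; exact hΩo.inter Metric.isOpen_ball
  have hGb : Bornology.IsBounded G := hΩb.subset (by rw [hG]; exact inter_subset_left)
  obtain ⟨R, hR⟩ := hGb.subset_closedBall 0
  have hst : 0 < T - t + lam := by have := ht.2; linarith
  have hIntOn : ∀ f : Euc n → ℝ, Continuous f → IntegrableOn f G := fun f hf =>
    (hf.continuousOn.integrableOn_compact (isCompact_closedBall 0 R)).mono_set hR
  -- regularity of z t
  have hzt : ContDiff ℝ 2 (z t) := hz.comp (contDiff_const.prodMk contDiff_id)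
  have hgradC : ContDiff ℝ 1 (fun y => gradient (z t) y) := gradient_contDiff (z t) hzt
  -- time derivative of z
  set zd : ℝ → Euc n → ℝ :=
    fun u x => fderiv ℝ (Function.uncurry z) (u, x) ((1:ℝ), (0:Euc n)) with hzd_def
  have hzd : ∀ (u : ℝ) (x : Euc n), HasDerivAt (fun v => z v x) (zd u x) u := by
    intro u x
    have hcurve : HasDerivAt (fun v : ℝ => (v, x)) ((1:ℝ), (0:Euc n)) u :=
      (hasDerivAt_id u).prodMk (hasDerivAt_const u x)
    have hfd : HasFDerivAt (Function.uncurry z)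
        (fderiv ℝ (Function.uncurry z) (u, x)) (u, x) :=
      (hz.differentiable (by norm_num) (u, x)).hasFDerivAt
    exact hfd.comp_hasDerivAt u hcurve
  have hzdc : Continuous (fun p : ℝ × Euc n => fderiv ℝ (Function.uncurry z) p ((1:ℝ), (0:Euc n))) :=
    (hz.continuous_fderiv (by norm_num)).clm_apply continuous_const
  have hzc : Continuous (Function.uncurry z) := hz.continuous
  -- the time-derivative integrand
  set F' : ℝ → Euc n → ℝ := fun u x =>
    2 * z u x * zd u x * Gweight xg T lam x u
      + z u x ^ 2 * (Gweight xg T lam x u *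
          ((n : ℝ) / (2 * (T - u + lam)) - ‖x - xg‖ ^ 2 / (4 * (T - u + lam) ^ 2))) with hF'def
  -- positivity of T - u + lam on the ball
  have hball_pos : ∀ u ∈ Metric.ball t (lam / 2), 0 < T - u + lam := by
    intro u hu
    rw [Metric.mem_ball, Real.dist_eq, abs_lt] at hu
    have := ht.2
    linarith [hu.1, hu.2]
  -- pointwise derivative
  have hderiv_pt : ∀ x : Euc n, ∀ u ∈ Metric.ball t (lam / 2),
      HasDerivAt (fun v => (z v x) ^ 2 * Gweight xg T lam x v) (F' u x) u := by
    intro x u hu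
    have hus := hball_pos u hu
    have h1 : HasDerivAt (fun v => (z v x) ^ 2) (2 * z u x ^ 1 * zd u x) u := by
      exact_mod_cast (hzd u x).pow 2
    have h2 := gweight_hasDerivAt_time xg T lam x u hus
    have h3 := h1.mul h2
    refine h3.congr_deriv ?_
    simp only [hF'def, pow_one]
    try ring
  -- continuity of F' on a compact set
  set K : Set (ℝ × Euc n) := Metric.closedBall t (lam / 2) ×ˢ Metric.closedBall (0 : Euc n) R
    with hKdef
  have hKc : IsCompact K := (isCompact_closedBall _ _).prod (isCompact_closedBall _ _)
  have hK_pos : ∀ p : ℝ × Euc n, p ∈ K → T - p.1 + lam ≠ 0 := by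
    rintro ⟨u, x⟩ hp
    have hu := hp.1
    rw [Metric.mem_closedBall, Real.dist_eq, abs_le] at hu
    have := ht.2
    intro hc
    linarith [hu.1, hu.2, hlam]
  have hbase : Continuous (fun p : ℝ × Euc n => T - p.1 + lam) := (continuous_const.sub continuous_fst).add continuous_const
  have hGwC : ContinuousOn (fun p : ℝ × Euc n => Gweight xg T lam p.2 p.1) K := by
    have : (fun p : ℝ × Euc n => Gweight xg T lam p.2 p.1)
        = fun p => (T - p.1 + lam) ^ (-(n:ℝ)/2) *
            Real.exp (-‖p.2 - xg‖ ^ 2 / (4 * (T - p.1 + lam))) := rfl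
    rw [this]
    refine ContinuousOn.mul ?_ ?_
    · intro p hp
      exact ((hbase.continuousAt).rpow_const (Or.inl (hK_pos p hp))).continuousWithinAt
    · refine (Real.continuous_exp.comp_continuousOn ?_)
      refine ContinuousOn.div ?_ ?_ ?_
      · exact Continuous.continuousOn
          (((continuous_snd.sub continuous_const).norm.pow 2).neg)
      · exact (continuous_const.mul hbase).continuousOn
      · exact fun p hp => mul_ne_zero (by norm_num) (hK_pos p hp)
  have hF'C : ContinuousOn (fun p : ℝ × Euc n => F' p.1 p.2) K := by
    simp only [hF'def]
    refine ContinuousOn.add ?_ ?_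
    · refine ContinuousOn.mul ?_ hGwC
      refine Continuous.continuousOn ?_
      exact (continuous_const.mul hzc).mul hzdc
    · refine ContinuousOn.mul ((hzc.pow 2).continuousOn) ?_
      refine ContinuousOn.mul hGwC ?_
      refine ContinuousOn.sub ?_ ?_
      · refine ContinuousOn.div continuousOn_const ((continuous_const.mul hbase).continuousOn) ?_
        exact fun p hp => mul_ne_zero (by norm_num) (hK_pos p hp)
      · refine ContinuousOn.div
          (Continuous.continuousOn ((continuous_snd.sub continuous_const).norm.pow 2))
          (Continuous.continuousOn (continuous_const.mul (hbase.pow 2))) ?_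
        exact fun p hp => mul_ne_zero (by norm_num) (pow_ne_zero 2 (hK_pos p hp))
  obtain ⟨C, hC⟩ := hKc.exists_bound_of_continuousOn hF'C
  -- continuity in x for fixed u
  have hGwx : ∀ u : ℝ, Continuous (fun x : Euc n => Gweight xg T lam x u) := by
    intro u
    refine continuous_const.mul (Real.continuous_exp.comp ?_)
    exact (((continuous_id.sub continuous_const).norm.pow 2).neg).div_const _
  have hzu : ∀ u : ℝ, Continuous (z u) := fun u =>
    hzc.comp (continuous_const.prodMk continuous_id)
  have hzdu : Continuous (fun x => zd t x) :=
    hzdc.comp (continuous_const.prodMk continuous_id)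
  have hF't_cont : Continuous (F' t) := by
    simp only [hF'def]
    refine Continuous.add ?_ ?_
    · exact ((continuous_const.mul (hzu t)).mul hzdu).mul (hGwx t)
    · refine Continuous.mul ((hzu t).pow 2) ?_
      refine Continuous.mul (hGwx t) ?_
      refine Continuous.sub continuous_const ?_
      exact ((continuous_id.sub continuous_const).norm.pow 2).div_const _
  -- differentiation under the integral sign
  have hmain := hasDerivAt_integral_of_dominated_loc_of_deriv_le
    (μ := volume.restrict G) (F := fun u x => (z u x) ^ 2 * Gweight xg T lam x u)
    (F' := F') (x₀ := t) (bound := fun _ => |C|) (Metric.ball_mem_nhds t (half_pos hlam))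
    (Filter.Eventually.of_forall fun u =>
      (((hzu u).pow 2).mul (hGwx u)).aestronglyMeasurable)
    (hIntOn _ (((hzu t).pow 2).mul (hGwx t)))
    hF't_cont.aestronglyMeasurable
    ((ae_restrict_mem hGo.measurableSet).mono fun x hx u hu => by
      have hp : (u, x) ∈ K := by
        constructor
        · exact Metric.ball_subset_closedBall hu
        · exact hR hx
      exact le_trans (hC (u, x) hp) (le_abs_self C))
    (integrableOn_const hGb.measure_lt_top.ne)
    ((ae_restrict_mem hGo.measurableSet).mono fun x hx u hu => hderiv_pt x u hu)
  obtain ⟨-, hDer⟩ := hmain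
  -- identify the derivative
  have hNfreq : Nfreq G xg T lam z t * (∫ x in G, (z t x) ^ 2 * Gweight xg T lam x t)
      = ∫ x in G, ‖gradient (z t) x‖ ^ 2 * Gweight xg T lam x t := by
    rw [Nfreq]; exact div_mul_cancel₀ _ hne
  -- the vector field
  set Fv : Euc n → Euc n := fun y =>
    (2 * z t y * Gweight xg T lam y t) • gradient (z t) y
      + (z t y * z t y * Gweight xg T lam y t * (2 * (T - t + lam))⁻¹) • (y - xg) with hFvdef
  have hFvC : ContDiff ℝ 1 Fv := by
    refine ContDiff.add ?_ ?_
    · exact ((contDiff_const.mul (hzt.of_le (by norm_num))).mul (gweight_contDiff xg T lam t)).smul hgradC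
    · exact ((((hzt.of_le (by norm_num)).mul (hzt.of_le (by norm_num))).mul
        (gweight_contDiff xg T lam t)).mul contDiff_const).smul (contDiff_id.sub contDiff_const)
  have hFv0 : ∀ x ∈ frontier G, Fv x = 0 := by
    intro x hx
    have hz0 : z t x = 0 := hzbc t ⟨ht.1.le, ht.2⟩ x hx
    simp [hFvdef, hz0]
  have hdiv0 : ∫ x in G, diverg Fv x = 0 :=
    diverg_integral_zero Fv hFvC G hGo hGb hFv0
  have hlaplc : Continuous (lapl (z t)) := by
    unfold lapl diverg
    refine continuous_finset_sum _ fun i _ => ?_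
    have hgi : ContDiff ℝ 1 (fun y => gradient (z t) y i) :=
      (EuclideanSpace.proj (𝕜 := ℝ) i).contDiff.comp hgradC
    exact (hgi.continuous_fderiv one_ne_zero).clm_apply continuous_const
  have hgradn : Continuous (fun x => ‖gradient (z t) x‖ ^ 2) :=
    ((hgradC.continuous).norm.pow 2)
  have hdivFc : Continuous (fun x => diverg Fv x) := by
    have heq : (fun x => diverg Fv x) = fun x =>
        2 * Gweight xg T lam x t * ‖gradient (z t) x‖ ^ 2
        + 2 * z t x * Gweight xg T lam x t * lapl (z t) x
        + z t x * z t x * (Gweight xg T lam x t *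
            ((n : ℝ) / (2 * (T - t + lam)) - ‖x - xg‖ ^ 2 / (4 * (T - t + lam) ^ 2))) :=
      funext fun x => divF_eq xg T lam t hst (z t) hzt x
    rw [heq]
    refine Continuous.add (Continuous.add ?_ ?_) ?_
    · exact (continuous_const.mul (hGwx t)).mul hgradn
    · exact ((continuous_const.mul (hzu t)).mul (hGwx t)).mul hlaplc
    · refine Continuous.mul ((hzu t).mul (hzu t)) ?_
      refine Continuous.mul (hGwx t) ?_
      exact continuous_const.sub (((continuous_id.sub continuous_const).norm.pow 2).div_const _)
  -- pointwise rearrangement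
  have hpt : ∀ x : Euc n, F' t x =
      2 * (z t x * (zd t x - lapl (z t) x) * Gweight xg T lam x t)
        - 2 * (‖gradient (z t) x‖ ^ 2 * Gweight xg T lam x t) + diverg Fv x := by
    intro x
    rw [divF_eq xg T lam t hst (z t) hzt x]
    simp only [hF'def]
    ring
  have hI1 : IntegrableOn (fun x =>
      2 * (z t x * (zd t x - lapl (z t) x) * Gweight xg T lam x t)) G :=
    hIntOn _ (continuous_const.mul (((hzu t).mul (hzdu.sub hlaplc)).mul (hGwx t)))
  have hI2 : IntegrableOn (fun x =>
      2 * (‖gradient (z t) x‖ ^ 2 * Gweight xg T lam x t)) G :=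
    hIntOn _ (continuous_const.mul (hgradn.mul (hGwx t)))
  have hI3 : IntegrableOn (fun x => diverg Fv x) G := hIntOn _ hdivFc
  have hval : (∫ x in G, F' t x) =
      2 * ((∫ x in G,
          z t x * (deriv (fun s => z s x) t - lapl (z t) x) * Gweight xg T lam x t)
        - Nfreq G xg T lam z t * (∫ x in G, (z t x) ^ 2 * Gweight xg T lam x t)) := by
    have hAd : (∫ x in G,
        z t x * (deriv (fun s => z s x) t - lapl (z t) x) * Gweight xg T lam x t)
        = ∫ x in G, z t x * (zd t x - lapl (z t) x) * Gweight xg T lam x t := by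
      refine setIntegral_congr_fun hGo.measurableSet fun x _ => ?_
      rw [(hzd t x).deriv]
    rw [hAd, hNfreq]
    calc ∫ x in G, F' t x
        = ∫ x in G, (2 * (z t x * (zd t x - lapl (z t) x) * Gweight xg T lam x t)
            - 2 * (‖gradient (z t) x‖ ^ 2 * Gweight xg T lam x t) + diverg Fv x) :=
          setIntegral_congr_fun hGo.measurableSet fun x _ => hpt x
      _ = (∫ x in G, (2 * (z t x * (zd t x - lapl (z t) x) * Gweight xg T lam x t)
            - 2 * (‖gradient (z t) x‖ ^ 2 * Gweight xg T lam x t)))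
          + ∫ x in G, diverg Fv x := integral_add (hI1.sub hI2) hI3
      _ = (∫ x in G, 2 * (z t x * (zd t x - lapl (z t) x) * Gweight xg T lam x t))
          - (∫ x in G, 2 * (‖gradient (z t) x‖ ^ 2 * Gweight xg T lam x t))
          + ∫ x in G, diverg Fv x := by rw [integral_sub hI1 hI2]
      _ = 2 * (∫ x in G, z t x * (zd t x - lapl (z t) x) * Gweight xg T lam x t)
          - 2 * (∫ x in G, ‖gradient (z t) x‖ ^ 2 * Gweight xg T lam x t) + 0 := by
          rw [integral_const_mul, integral_const_mul, hdiv0]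
      _ = 2 * ((∫ x in G, z t x * (zd t x - lapl (z t) x) * Gweight xg T lam x t)
          - (∫ x in G, ‖gradient (z t) x‖ ^ 2 * Gweight xg T lam x t)) := by ring
  rw [← hval]
  exact hDer
end
end

section
/- Let G ⊂ ℝⁿ be a bounded domain with C² boundary and x₀ ∈ G. Then for every f ∈ H₀¹(G) and every λ > 0: ∫_G (|x−x₀|²/(8λ)) |f(x)|² e^{−|x−x₀|²/(4λ)} dx ≤ 2λ ∫_G |∇f(x)|² e^{−|x−x₀|²/(4λ)} dx + (n/2) ∫_G |f(x)|² e^{−|x−x₀|²/(4λ)} dx. -/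
open MeasureTheory Set ENNReal

noncomputable section

set_option maxHeartbeats 1000000

open Measure Filter Topology Bornology Module

namespace GH

/-- Extension by zero of a function continuous up to the boundary and vanishing on the
boundary of an open set is continuous. -/
lemma continuous_indicator_of_continuousOn {E : Type*} [TopologicalSpace E] {G : Set E}
    (hGo : IsOpen G) {u : E → ℝ} (hc : ContinuousOn u (closure G))
    (h0 : ∀ x ∈ frontier G, u x = 0) : Continuous (G.indicator u) := by
  rw [continuous_iff_continuousAt]
  intro x
  by_cases hx : x ∈ G
  · have hev : G.indicator u =ᶠ[𝓝 x] u := by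
      filter_upwards [hGo.mem_nhds hx] with y hy
      exact indicator_of_mem hy u
    have hcx : ContinuousAt u x :=
      (hc x (subset_closure hx)).continuousAt (mem_of_superset (hGo.mem_nhds hx) subset_closure)
    exact hcx.congr hev.symm
  by_cases hx' : x ∈ closure G
  · have hfr : x ∈ frontier G := ⟨hx', by simpa [hGo.interior_eq] using hx⟩
    have hxval : G.indicator u x = 0 := indicator_of_notMem hx u
    have h1 : ContinuousWithinAt (G.indicator u) (closure G) x := by
      apply (hc x hx').congr
      · intro y hy
        by_cases hyG : y ∈ G
        · exact indicator_of_mem hyG u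
        · have hyfr : y ∈ frontier G := ⟨hy, by simpa [hGo.interior_eq] using hyG⟩
          simp [indicator_of_notMem hyG, h0 y hyfr]
      · simp [hxval, h0 x hfr]
    have h2 : ContinuousWithinAt (G.indicator u) (closure G)ᶜ x := by
      apply (continuousWithinAt_const (b := (0:ℝ))).congr
      · intro y hy
        exact indicator_of_notMem (fun hyG => hy (subset_closure hyG)) u
      · simp [hxval]
    have h3 := h1.union h2
    rwa [union_compl_self, continuousWithinAt_univ] at h3
  · have hev : G.indicator u =ᶠ[𝓝 x] fun _ => (0:ℝ) := by
      filter_upwards [(isClosed_closure (s := G)).isOpen_compl.mem_nhds hx'] with y hy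
      exact indicator_of_notMem (fun hyG => hy (subset_closure hyG)) u
    exact continuousAt_const.congr hev.symm

/-- 1-D core: a continuous function vanishing outside a bounded open set `S`, differentiable on
`S` with integrable derivative (extended by `0`), has derivative of integral zero. -/
lemma integral_eq_zero_oneDim {S : Set ℝ} (hS : IsOpen S) (hSb : IsBounded S)
    {φ ψ : ℝ → ℝ} (hφ : Continuous φ) (hφ0 : ∀ t ∉ S, φ t = 0) (hψ0 : ∀ t ∉ S, ψ t = 0)
    (hd : ∀ t ∈ S, HasDerivAt φ (ψ t) t) (hψ : Integrable ψ) : (∫ t, ψ t) = 0 := by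
  have hcomp0 : ∀ C : Set ℝ, (∃ t ∈ S, C = connectedComponentIn S t) → ∫ t in C, ψ t = 0 := by
    rintro C ⟨t₀, ht₀, rfl⟩
    have hCS : connectedComponentIn S t₀ ⊆ S := connectedComponentIn_subset S t₀
    have hCo : IsOpen (connectedComponentIn S t₀) := hS.connectedComponentIn
    have hCne : t₀ ∈ connectedComponentIn S t₀ := mem_connectedComponentIn ht₀
    set C := connectedComponentIn S t₀ with hC
    have hCb : IsBounded C := hSb.subset hCS
    have hbdd : BddBelow C := hCb.bddBelow
    have hbdd' : BddAbove C := hCb.bddAbove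
    set a := sInf C with ha
    set b := sSup C with hb
    have hCneE : C.Nonempty := ⟨t₀, hCne⟩
    have hanotin : a ∉ C := by
      intro haC
      obtain ⟨ε, hε, hball⟩ := Metric.isOpen_iff.1 hCo a haC
      have hmem : a - ε / 2 ∈ C := by
        apply hball
        simp only [Metric.mem_ball, Real.dist_eq]
        rw [abs_of_nonpos (by linarith)]
        linarith
      have := csInf_le hbdd hmem
      rw [← ha] at this
      linarith
    have hbnotin : b ∉ C := by
      intro hbC
      obtain ⟨ε, hε, hball⟩ := Metric.isOpen_iff.1 hCo b hbC
      have hmem : b + ε / 2 ∈ C := by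
        apply hball
        simp only [Metric.mem_ball, Real.dist_eq]
        rw [abs_of_nonneg (by linarith)]
        linarith
      have := le_csSup hbdd' hmem
      rw [← hb] at this
      linarith
    have hsub : C ⊆ Ioo a b := by
      intro x hx
      refine ⟨(csInf_le hbdd hx).lt_of_ne fun h => hanotin (by rw [ha, h]; exact hx), ?_⟩
      exact (le_csSup hbdd' hx).lt_of_ne fun h => hbnotin (by rw [hb, ← h]; exact hx)
    have hOC : OrdConnected C := (isPreconnected_connectedComponentIn).ordConnected
    have hsup : Ioo a b ⊆ C := by
      intro t ht
      obtain ⟨x, hxC, hxt⟩ := exists_lt_of_csInf_lt hCneE ht.1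
      obtain ⟨y, hyC, hty⟩ := exists_lt_of_lt_csSup hCneE ht.2
      exact hOC.out hxC hyC ⟨hxt.le, hty.le⟩
    have hCIoo : C = Ioo a b := Subset.antisymm hsub hsup
    have hab : a < b := by
      obtain ⟨x, hx⟩ := hCneE
      exact (hsub hx).1.trans (hsub hx).2
    have hanotS : a ∉ S := by
      intro haS
      obtain ⟨ε, hε, hball⟩ := Metric.isOpen_iff.1 hS a haS
      set c := min ((a + b) / 2) (a + ε / 2) with hcdef
      have hac : a < c := lt_min (by linarith) (by linarith)
      have hcb : c < b := (min_le_left _ _).trans_lt (by linarith)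
      have hcC : c ∈ C := hsup ⟨hac, hcb⟩
      have hcball : c ∈ Metric.ball a ε := by
        simp only [Metric.mem_ball, Real.dist_eq]
        rw [abs_of_pos (by linarith)]
        have : c ≤ a + ε / 2 := min_le_right _ _
        linarith
      have hU : IsPreconnected (Metric.ball a ε ∪ Ioo a b) := by
        rw [Real.ball_eq_Ioo]
        exact IsPreconnected.union c
          (by rw [← Real.ball_eq_Ioo]; exact hcball) ⟨hac, hcb⟩
          isPreconnected_Ioo isPreconnected_Ioo
      have hUS : Metric.ball a ε ∪ Ioo a b ⊆ S := by
        rintro y (hy | hy)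
        · exact hball hy
        · exact hCS (hsup hy)
      have hsubC : Metric.ball a ε ∪ Ioo a b ⊆ C := by
        have h1 : Metric.ball a ε ∪ Ioo a b ⊆ connectedComponentIn S c :=
          hU.subset_connectedComponentIn (mem_union_left _ hcball) hUS
        rwa [← connectedComponentIn_eq (show c ∈ connectedComponentIn S t₀ from hcC)] at h1
      have hmem : a - ε / 2 ∈ C := by
        apply hsubC
        left
        simp only [Metric.mem_ball, Real.dist_eq]
        rw [abs_of_nonpos (by linarith)]
        linarith
      exact absurd ((hsub hmem).1) (by linarith)
    have hbnotS : b ∉ S := by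
      intro hbS
      obtain ⟨ε, hε, hball⟩ := Metric.isOpen_iff.1 hS b hbS
      set c := max ((a + b) / 2) (b - ε / 2) with hcdef
      have hac : a < c := (by linarith : a < (a + b) / 2).trans_le (le_max_left _ _)
      have hcb : c < b := max_lt (by linarith) (by linarith)
      have hcC : c ∈ C := hsup ⟨hac, hcb⟩
      have hcball : c ∈ Metric.ball b ε := by
        simp only [Metric.mem_ball, Real.dist_eq]
        rw [abs_of_nonpos (by linarith)]
        have : b - ε / 2 ≤ c := le_max_right _ _
        linarith
      have hU : IsPreconnected (Metric.ball b ε ∪ Ioo a b) := by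
        rw [Real.ball_eq_Ioo]
        exact IsPreconnected.union c
          (by rw [← Real.ball_eq_Ioo]; exact hcball) ⟨hac, hcb⟩
          isPreconnected_Ioo isPreconnected_Ioo
      have hUS : Metric.ball b ε ∪ Ioo a b ⊆ S := by
        rintro y (hy | hy)
        · exact hball hy
        · exact hCS (hsup hy)
      have hsubC : Metric.ball b ε ∪ Ioo a b ⊆ C := by
        have h1 : Metric.ball b ε ∪ Ioo a b ⊆ connectedComponentIn S c :=
          hU.subset_connectedComponentIn (mem_union_left _ hcball) hUS
        rwa [← connectedComponentIn_eq (show c ∈ connectedComponentIn S t₀ from hcC)] at h1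
      have hmem : b + ε / 2 ∈ C := by
        apply hsubC
        left
        simp only [Metric.mem_ball, Real.dist_eq]
        rw [abs_of_nonneg (by linarith)]
        linarith
      exact absurd ((hsub hmem).2) (by linarith)
    have hFTC : (∫ t in a..b, ψ t) = φ b - φ a :=
      intervalIntegral.integral_eq_sub_of_hasDeriv_right_of_le hab.le hφ.continuousOn
        (fun x hx => (hd x (hCS (hsup hx))).hasDerivWithinAt)
        (hψ.intervalIntegrable)
    rw [hCIoo]
    have heq : (∫ t in Ioo a b, ψ t) = ∫ t in a..b, ψ t := by
      rw [intervalIntegral.integral_of_le hab.le, integral_Ioc_eq_integral_Ioo]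
    rw [heq, hFTC, hφ0 a hanotS, hφ0 b hbnotS, sub_zero]
  -- decompose S into components
  set T : Set (Set ℝ) := (fun t => connectedComponentIn S t) '' S with hTdef
  have hTopen : ∀ C ∈ T, IsOpen C := by rintro C ⟨t, ht, rfl⟩; exact hS.connectedComponentIn
  have hTne : ∀ C ∈ T, C.Nonempty := by
    rintro C ⟨t, ht, rfl⟩; exact ⟨t, mem_connectedComponentIn ht⟩
  have hTdisj : T.PairwiseDisjoint id := by
    rintro C ⟨t, ht, rfl⟩ C' ⟨t', ht', rfl⟩ hne
    refine Set.disjoint_left.2 fun z hz hz' => hne ?_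
    simp only [id] at *
    rw [connectedComponentIn_eq hz, connectedComponentIn_eq hz']
  have hTc : T.Countable :=
    hTdisj.countable_of_isOpen (fun C hC => hTopen C hC) (fun C hC => hTne C hC)
  have hUn : ⋃₀ T = S := by
    apply Subset.antisymm
    · rintro x ⟨C, ⟨t, ht, rfl⟩, hx⟩; exact connectedComponentIn_subset S t hx
    · intro x hx
      exact ⟨connectedComponentIn S x, ⟨x, hx, rfl⟩, mem_connectedComponentIn hx⟩
  have hψind : ψ = S.indicator ψ := by
    funext t; by_cases ht : t ∈ S
    · rw [indicator_of_mem ht]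
    · rw [indicator_of_notMem ht]; exact hψ0 t ht
  haveI : Countable ↥T := hTc.to_subtype
  have hsplit : (∫ t in S, ψ t) = ∑' (C : T), ∫ t in (C : Set ℝ), ψ t := by
    rw [← hUn, sUnion_eq_iUnion]
    exact integral_iUnion (fun C => (hTopen _ C.2).measurableSet)
      (fun C C' hCC' => hTdisj C.2 C'.2 (fun h => hCC' (Subtype.coe_injective h)))
      (hψ.integrableOn)
  calc ∫ t, ψ t = ∫ t, S.indicator ψ t := by rw [← hψind]
    _ = ∫ t in S, ψ t := integral_indicator hS.measurableSet
    _ = ∑' (C : T), ∫ t in (C : Set ℝ), ψ t := hsplit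
    _ = 0 := by
        have : ∀ C : T, (∫ t in (C : Set ℝ), ψ t) = 0 := by
          rintro ⟨C, t, ht, hC⟩
          exact hcomp0 C ⟨t, ht, hC.symm⟩
        rw [tsum_congr this, tsum_zero]


lemma integral_eq_zero_prod {E' : Type*} [NormedAddCommGroup E'] [NormedSpace ℝ E']
    [MeasurableSpace E'] [OpensMeasurableSpace E'] {μ : Measure E'} [SigmaFinite μ]
    {S : Set (E' × ℝ)} (hS : IsOpen S) (hSb : IsBounded S)
    {u D : E' × ℝ → ℝ} (hu : Continuous u) (hu0 : ∀ p ∉ S, u p = 0)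
    (hD0 : ∀ p ∉ S, D p = 0)
    (hd : ∀ p ∈ S, HasLineDerivAt ℝ u (D p) p ((0 : E'), (1 : ℝ)))
    (hD : Integrable D (μ.prod volume)) :
    ∫ p, D p ∂(μ.prod volume) = 0 := by
  rw [integral_prod _ hD]
  have hae : ∀ᵐ x ∂μ, (∫ t, D (x, t)) = 0 := by
    filter_upwards [hD.prod_right_ae] with x hx
    obtain ⟨R, hR⟩ := hSb.subset_closedBall 0
    have hSx : IsOpen {t : ℝ | (x, t) ∈ S} := hS.preimage (Continuous.prodMk_right x)
    have hSxb : IsBounded {t : ℝ | (x, t) ∈ S} := by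
      apply (Metric.isBounded_closedBall (x := (0:ℝ)) (r := R)).subset
      intro t ht
      have h1 : ‖(x, t)‖ ≤ R := by
        have := hR ht
        rwa [Metric.mem_closedBall, dist_zero_right] at this
      have h2 : ‖t‖ ≤ ‖(x, t)‖ := by
        simpa using norm_snd_le ((x, t) : E' × ℝ)
      simpa [Metric.mem_closedBall, dist_zero_right] using h2.trans h1
    refine integral_eq_zero_oneDim hSx hSxb (hu.comp (Continuous.prodMk_right x))
      (fun t ht => hu0 _ ht) (fun t ht => hD0 _ ht) ?_ hx
    intro t ht
    convert (hd (x, t) ht).scomp_of_eq t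
      ((hasDerivAt_id t).add (hasDerivAt_const t (-t))) (by simp) <;> (try rfl) <;>
      simp <;> (try ext s) <;> simp <;> (try congr 1) <;> ring
  rw [integral_congr_ae hae, integral_zero]

lemma integral_eq_zero_prod_haar {E' : Type*} [NormedAddCommGroup E'] [NormedSpace ℝ E']
    [MeasurableSpace E'] [BorelSpace E'] [FiniteDimensional ℝ E']
    {μ : Measure (E' × ℝ)} [IsAddHaarMeasure μ]
    {S : Set (E' × ℝ)} (hS : IsOpen S) (hSb : IsBounded S)
    {u D : E' × ℝ → ℝ} (hu : Continuous u) (hu0 : ∀ p ∉ S, u p = 0)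
    (hD0 : ∀ p ∉ S, D p = 0)
    (hd : ∀ p ∈ S, HasLineDerivAt ℝ u (D p) p ((0 : E'), (1 : ℝ)))
    (hD : Integrable D μ) :
    ∫ p, D p ∂μ = 0 := by
  let ν : Measure E' := addHaar
  have A : ν.prod volume = (addHaarScalarFactor (ν.prod volume) μ) • μ :=
    isAddLeftInvariant_eq_smul _ _
  have B : μ = (addHaarScalarFactor μ (ν.prod volume)) • (ν.prod volume) :=
    isAddLeftInvariant_eq_smul _ _
  have hD' : Integrable D (ν.prod volume) := by rw [A]; exact hD.smul_measure_nnreal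
  have h0 : ∫ p, D p ∂(ν.prod volume) = 0 :=
    integral_eq_zero_prod hS hSb hu hu0 hD0 hd hD'
  rw [B, integral_smul_nnreal_measure, h0, smul_zero]

/-- Key step: the integral of the (everywhere extended by zero) directional derivative of a
compactly supported continuous function differentiable on the open bounded set `S` vanishes. -/
lemma integral_lineDeriv_eq_zero {E : Type*} [NormedAddCommGroup E] [NormedSpace ℝ E]
    [MeasurableSpace E] [BorelSpace E] [FiniteDimensional ℝ E]
    {μ : Measure E} [IsAddHaarMeasure μ]
    {S : Set E} (hS : IsOpen S) (hSb : IsBounded S)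
    {u D : E → ℝ} {v : E} (hv : v ≠ 0) (hu : Continuous u) (hu0 : ∀ p ∉ S, u p = 0)
    (hD0 : ∀ p ∉ S, D p = 0) (hd : ∀ p ∈ S, HasLineDerivAt ℝ u (D p) p v)
    (hD : Integrable D μ) : ∫ p, D p ∂μ = 0 := by
  have : Nontrivial E := nontrivial_of_ne v 0 hv
  let n := finrank ℝ E
  let E' := Fin (n - 1) → ℝ
  obtain ⟨L, hL⟩ : ∃ L : E ≃L[ℝ] (E' × ℝ), L v = (0, 1) := by
    have h1 : finrank ℝ (E' × ℝ) = n := by simpa [E'] using Nat.sub_add_cancel finrank_pos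
    have L₀ : E ≃L[ℝ] (E' × ℝ) := (ContinuousLinearEquiv.ofFinrankEq h1).symm
    obtain ⟨M, hM⟩ : ∃ M : (E' × ℝ) ≃L[ℝ] (E' × ℝ), M (L₀ v) = (0, 1) := by
      apply SeparatingDual.exists_continuousLinearEquiv_apply_eq
      · simpa using hv
      · simp
    exact ⟨L₀.trans M, by simp [hM]⟩
  let ν := Measure.map L μ
  have L_emb : MeasurableEmbedding L := L.toHomeomorph.measurableEmbedding
  haveI : IsAddHaarMeasure ν := L.isAddHaarMeasure_map μ
  have hmap : ∫ p, D p ∂μ = ∫ q, D (L.symm q) ∂ν := by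
    rw [L_emb.integral_map]
    simp
  rw [hmap]
  have hSopen : IsOpen (L '' S) := L.toHomeomorph.isOpen_image.2 hS
  have hSbb : IsBounded (L '' S) := (L : E →L[ℝ] (E' × ℝ)).lipschitz.isBounded_image hSb
  apply integral_eq_zero_prod_haar hSopen hSbb (hu.comp L.symm.continuous)
  · intro p hp
    exact hu0 _ (fun hmem => hp ⟨_, hmem, by simp⟩)
  · intro p hp
    exact hD0 _ (fun hmem => hp ⟨_, hmem, by simp⟩)
  · rintro p ⟨y, hy, rfl⟩
    have h1 := hd y hy
    have h2 : HasLineDerivAt ℝ ((fun q => u (L.symm q)) ∘ (L : E →ₗ[ℝ] (E' × ℝ))) (D y) y v := by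
      convert h1 using 1
      ext z; simp
    have h3 := h2.of_comp
    rw [show ((L : E →ₗ[ℝ] (E' × ℝ)) : E → E' × ℝ) v = L v from rfl, hL] at h3
    simpa [Function.comp_def] using h3
  · rw [L_emb.integrable_map_iff]
    simpa [Function.comp_def] using hD


lemma exists_hasFDerivAt_Fi {n : ℕ} (f : Euc n → ℝ) (x₀ : Euc n) {lam : ℝ} (hlam : lam ≠ 0)
    (i : Fin n) {x : Euc n} (hfd : DifferentiableAt ℝ f x) :
    ∃ Φ : Euc n →L[ℝ] ℝ,
      HasFDerivAt
        (fun y => (y i - x₀ i) * (f y * f y * Real.exp (-‖y - x₀‖ ^ 2 / (4 * lam)))) Φ x ∧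
      Φ (EuclideanSpace.single i 1) =
        Real.exp (-‖x - x₀‖ ^ 2 / (4 * lam)) *
          (f x * f x + 2 * f x * fderiv ℝ f x (EuclideanSpace.single i 1) * (x i - x₀ i)
            - f x * f x * ((x i - x₀ i) * (x i - x₀ i)) * (2 * lam)⁻¹) := by
  have hq : HasFDerivAt (fun y : Euc n => ‖y - x₀‖ ^ 2)
      (2 • (innerSL ℝ (x - x₀)).comp (ContinuousLinearMap.id ℝ (Euc n))) x := by
    simpa using ((hasFDerivAt_id x).sub_const x₀).norm_sq
  have hs : HasFDerivAt (fun y : Euc n => -‖y - x₀‖ ^ 2 / (4 * lam))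
      ((-(4 * lam)⁻¹) • (2 • (innerSL ℝ (x - x₀)).comp (ContinuousLinearMap.id ℝ (Euc n)))) x := by
    have h3 : (fun y : Euc n => -‖y - x₀‖ ^ 2 / (4 * lam))
        = fun y => (-(4 * lam)⁻¹) * ‖y - x₀‖ ^ 2 := by
      funext y; ring
    rw [h3]
    exact hq.const_mul _
  have hw : HasFDerivAt (fun y : Euc n => Real.exp (-‖y - x₀‖ ^ 2 / (4 * lam)))
      (Real.exp (-‖x - x₀‖ ^ 2 / (4 * lam)) •
        ((-(4 * lam)⁻¹) • (2 • (innerSL ℝ (x - x₀)).comp (ContinuousLinearMap.id ℝ (Euc n))))) x :=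
    hs.exp
  have hff : HasFDerivAt (fun y => f y * f y) (f x • fderiv ℝ f x + f x • fderiv ℝ f x) x :=
    hfd.hasFDerivAt.mul hfd.hasFDerivAt
  have hA := hff.mul hw
  have hcoord : HasFDerivAt (fun y : Euc n => y i - x₀ i)
      ((EuclideanSpace.proj i : Euc n →L[ℝ] ℝ)) x :=
    (EuclideanSpace.proj i : Euc n →L[ℝ] ℝ).hasFDerivAt.sub_const _
  have hF := hcoord.mul hA
  refine ⟨_, hF, ?_⟩
  have h4 : (4 : ℝ) * lam ≠ 0 := by
    intro h
    apply hlam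
    linarith
  simp only [ContinuousLinearMap.add_apply, ContinuousLinearMap.smul_apply,
    ContinuousLinearMap.comp_apply, ContinuousLinearMap.coe_id', id_eq, smul_eq_mul,
    innerSL_apply_apply, PiLp.proj_apply, EuclideanSpace.inner_single_right,
    PiLp.sub_apply, EuclideanSpace.single_apply, if_pos rfl, conj_trivial,
    Pi.mul_apply, ↓reduceIte]
  field_simp
  ring


end GH

/-- Lemma 3.3: Gaussian-weighted Hardy-type inequality: for every
`f ∈ H₀¹(G)` and `λ > 0`,
`∫_G (|x−x₀|²/(8λ))|f|²e^{−|x−x₀|²/(4λ)} ≤ 2λ∫_G |∇f|²e^{−|x−x₀|²/(4λ)}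
  + (n/2)∫_G |f|²e^{−|x−x₀|²/(4λ)}`. -/
theorem gaussian_hardy_inequality
    {n : ℕ} (hn : 1 ≤ n) (G : Set (Euc n))
    (hGo : IsOpen G) (hGb : Bornology.IsBounded G) (hGc : IsConnected G)
    (x₀ : Euc n) (hx₀ : x₀ ∈ G) :
    ∀ f : Euc n → ℝ,
      -- `f ∈ H₀¹(G)` (classical encoding)
      ContinuousOn f (closure G) →
      (∀ x ∈ G, DifferentiableAt ℝ f x) →
      (∀ x ∈ frontier G, f x = 0) →
      MemLp f 2 (volume.restrict G) →
      MemLp (fun x => ‖gradient f x‖) 2 (volume.restrict G) →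
      ∀ lam > (0:ℝ),
        (∫ x in G,
            (‖x - x₀‖ ^ 2 / (8 * lam)) * |f x| ^ 2 * Real.exp (-‖x - x₀‖ ^ 2 / (4 * lam)))
          ≤ 2 * lam * (∫ x in G, ‖gradient f x‖ ^ 2 * Real.exp (-‖x - x₀‖ ^ 2 / (4 * lam)))
            + ((n:ℝ) / 2) *
              (∫ x in G, |f x| ^ 2 * Real.exp (-‖x - x₀‖ ^ 2 / (4 * lam))) := by
  intro f hfc hfd hfz hf2 hg2 lam hlam
  have hlam' : lam ≠ 0 := ne_of_gt hlam
  have hGm : MeasurableSet G := hGo.measurableSet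
  -- weight function
  set w : Euc n → ℝ := fun y => Real.exp (-‖y - x₀‖ ^ 2 / (4 * lam)) with hw_def
  have hwc : Continuous w := by
    apply Real.continuous_exp.comp
    exact (((continuous_id.sub continuous_const).norm.pow 2).neg).div_const _
  have hwpos : ∀ x, 0 < w x := fun x => Real.exp_pos _
  have hwle : ∀ x, w x ≤ 1 := by
    intro x
    rw [hw_def]
    simp only
    rw [← Real.exp_zero]
    apply Real.exp_le_exp.2
    exact div_nonpos_of_nonpos_of_nonneg (neg_nonpos.2 (by positivity)) (by positivity)
  -- radius bound
  obtain ⟨R, hRsub⟩ := hGb.subset_closedBall x₀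
  have hRx : ∀ x ∈ G, ‖x - x₀‖ ≤ R := by
    intro x hx
    have := hRsub hx
    rwa [Metric.mem_closedBall, dist_eq_norm] at this
  have hR0 : 0 ≤ R := le_trans (by simp) (hRx x₀ hx₀)
  -- gradient and inner products
  have hgrad_inner : ∀ (x v : Euc n), (inner ℝ (gradient f x) v : ℝ) = fderiv ℝ f x v :=
    fun x v => InnerProductSpace.toDual_symm_apply
  have hgradm : Measurable (fun x => gradient f x) := by
    exact ((InnerProductSpace.toDual ℝ (Euc n)).symm.continuous.measurable).comp
      (measurable_fderiv ℝ f)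
  have habs_coord : ∀ (x : Euc n) (i : Fin n), |x i - x₀ i| ≤ ‖x - x₀‖ := by
    intro x i
    have h1 : |(inner ℝ (EuclideanSpace.single i (1:ℝ)) (x - x₀) : ℝ)|
        ≤ ‖EuclideanSpace.single i (1:ℝ)‖ * ‖x - x₀‖ := abs_real_inner_le_norm _ _
    rw [EuclideanSpace.inner_single_left] at h1
    simp only [conj_trivial, one_mul, EuclideanSpace.norm_single, norm_one] at h1
    simpa [PiLp.sub_apply] using h1
  have habs_fderiv : ∀ (x : Euc n) (i : Fin n),
      |fderiv ℝ f x (EuclideanSpace.single i 1)| ≤ ‖gradient f x‖ := by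
    intro x i
    rw [← hgrad_inner]
    have h1 := abs_real_inner_le_norm (gradient f x) (EuclideanSpace.single i (1:ℝ))
    simpa [EuclideanSpace.norm_single] using h1
  -- measurability over G
  have hfae : AEStronglyMeasurable f (volume.restrict G) :=
    (hfc.mono subset_closure).aestronglyMeasurable hGm
  have hgae : AEStronglyMeasurable (fun x => ‖gradient f x‖) (volume.restrict G) :=
    (hgradm.norm).aestronglyMeasurable
  -- integrability over G
  have hIf2 : Integrable (fun x => f x ^ 2) (volume.restrict G) := hf2.integrable_sq
  have hIg2 : Integrable (fun x => ‖gradient f x‖ ^ 2) (volume.restrict G) := hg2.integrable_sq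
  have hIsum : Integrable (fun x => f x ^ 2 + ‖gradient f x‖ ^ 2) (volume.restrict G) :=
    hIf2.add hIg2
  have hwapp : ∀ y : Euc n, w y = Real.exp (-‖y - x₀‖ ^ 2 / (4 * lam)) := fun y => rfl
  -- the component derivative functions
  set d : Fin n → Euc n → ℝ := fun i x =>
    w x * (f x * f x + 2 * f x * fderiv ℝ f x (EuclideanSpace.single i 1) * (x i - x₀ i)
      - f x * f x * ((x i - x₀ i) * (x i - x₀ i)) * (2 * lam)⁻¹) with hd_def
  have hcoordc : ∀ i : Fin n, Continuous fun y : Euc n => y i - x₀ i := fun i =>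
    ((EuclideanSpace.proj (𝕜 := ℝ) i).continuous.sub continuous_const)
  -- continuity of the extended vector-field components
  have hFcont : ∀ i : Fin n, Continuous
      (G.indicator (fun y => (y i - x₀ i) * (f y * f y * w y))) := by
    intro i
    apply GH.continuous_indicator_of_continuousOn hGo
    · exact (hcoordc i).continuousOn.mul ((hfc.mul hfc).mul hwc.continuousOn)
    · intro x hx; simp [hfz x hx]
  -- measurability of d i on G
  have hdae : ∀ i : Fin n, AEStronglyMeasurable (d i) (volume.restrict G) := by
    intro i
    rw [hd_def]
    apply (hwc.aestronglyMeasurable).mul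
    apply AEStronglyMeasurable.sub
    · apply AEStronglyMeasurable.add (hfae.mul hfae)
      exact ((aestronglyMeasurable_const.mul hfae).mul
        ((measurable_fderiv_apply_const ℝ f _).aestronglyMeasurable)).mul
        (hcoordc i).aestronglyMeasurable
    · exact ((hfae.mul hfae).mul
        ((hcoordc i).aestronglyMeasurable.mul (hcoordc i).aestronglyMeasurable)).mul
        aestronglyMeasurable_const
  -- pointwise bound for d i on G
  have hdbound : ∀ i : Fin n, ∀ x ∈ G,
      ‖d i x‖ ≤ (1 + R + R * R * (2 * lam)⁻¹) * (f x ^ 2 + ‖gradient f x‖ ^ 2) := by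
    intro i x hx
    have hr : |x i - x₀ i| ≤ R := (habs_coord x i).trans (hRx x hx)
    have hDf : |fderiv ℝ f x (EuclideanSpace.single i 1)| ≤ ‖gradient f x‖ := habs_fderiv x i
    have hb0 : (0:ℝ) ≤ ‖gradient f x‖ := norm_nonneg _
    have hw1 : w x ≤ 1 := hwle x
    have hw0 : 0 < w x := hwpos x
    have hr0 : (0:ℝ) ≤ |x i - x₀ i| := abs_nonneg _
    have t1 : |f x * f x| = f x ^ 2 := by rw [abs_mul_self]; ring
    have t2 : |2 * f x * fderiv ℝ f x (EuclideanSpace.single i 1) * (x i - x₀ i)|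
        ≤ 2 * (|f x| * ‖gradient f x‖ * R) := by
      rw [abs_mul, abs_mul, abs_mul, abs_two]
      calc 2 * |f x| * |fderiv ℝ f x (EuclideanSpace.single i 1)| * |x i - x₀ i|
          ≤ 2 * |f x| * ‖gradient f x‖ * R := by gcongr <;> positivity
        _ = 2 * (|f x| * ‖gradient f x‖ * R) := by ring
    have t3 : |f x * f x * ((x i - x₀ i) * (x i - x₀ i)) * (2 * lam)⁻¹|
        ≤ f x ^ 2 * (R * R) * (2 * lam)⁻¹ := by
      rw [abs_mul, abs_mul, t1, abs_mul,
        abs_of_pos (show (0:ℝ) < (2 * lam)⁻¹ by positivity)]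
      gcongr
    have hXb : |f x * f x + 2 * f x * fderiv ℝ f x (EuclideanSpace.single i 1) * (x i - x₀ i)
          - f x * f x * ((x i - x₀ i) * (x i - x₀ i)) * (2 * lam)⁻¹|
        ≤ f x ^ 2 + 2 * (|f x| * ‖gradient f x‖ * R) + f x ^ 2 * (R * R) * (2 * lam)⁻¹ := by
      have ha := abs_sub (f x * f x + 2 * f x * fderiv ℝ f x (EuclideanSpace.single i 1)
        * (x i - x₀ i)) (f x * f x * ((x i - x₀ i) * (x i - x₀ i)) * (2 * lam)⁻¹)
      have hb := abs_add_le (f x * f x)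
        (2 * f x * fderiv ℝ f x (EuclideanSpace.single i 1) * (x i - x₀ i))
      rw [t1] at hb
      linarith
    have hfinal : f x ^ 2 + 2 * (|f x| * ‖gradient f x‖ * R) + f x ^ 2 * (R * R) * (2 * lam)⁻¹
        ≤ (1 + R + R * R * (2 * lam)⁻¹) * (f x ^ 2 + ‖gradient f x‖ ^ 2) := by
      have h2ab : 2 * (|f x| * ‖gradient f x‖) ≤ f x ^ 2 + ‖gradient f x‖ ^ 2 := by
        nlinarith [sq_nonneg (|f x| - ‖gradient f x‖), sq_abs (f x)]
      have h2abR : 2 * (|f x| * ‖gradient f x‖ * R) ≤ R * (f x ^ 2 + ‖gradient f x‖ ^ 2) := by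
        nlinarith [mul_le_mul_of_nonneg_right h2ab hR0]
      have hiv : (0:ℝ) ≤ (2 * lam)⁻¹ := by positivity
      nlinarith [sq_nonneg (‖gradient f x‖),
        mul_nonneg (mul_nonneg (mul_nonneg hR0 hR0) hiv) (sq_nonneg (‖gradient f x‖))]
    have habs : ‖d i x‖ = w x * |f x * f x
        + 2 * f x * fderiv ℝ f x (EuclideanSpace.single i 1) * (x i - x₀ i)
        - f x * f x * ((x i - x₀ i) * (x i - x₀ i)) * (2 * lam)⁻¹| := by
      rw [hd_def]
      simp only [Real.norm_eq_abs, abs_mul, abs_of_pos hw0]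
    rw [habs]
    calc w x * |f x * f x
          + 2 * f x * fderiv ℝ f x (EuclideanSpace.single i 1) * (x i - x₀ i)
          - f x * f x * ((x i - x₀ i) * (x i - x₀ i)) * (2 * lam)⁻¹|
        ≤ 1 * |f x * f x
          + 2 * f x * fderiv ℝ f x (EuclideanSpace.single i 1) * (x i - x₀ i)
          - f x * f x * ((x i - x₀ i) * (x i - x₀ i)) * (2 * lam)⁻¹| :=
          mul_le_mul_of_nonneg_right hw1 (abs_nonneg _)
      _ = |f x * f x
          + 2 * f x * fderiv ℝ f x (EuclideanSpace.single i 1) * (x i - x₀ i)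
          - f x * f x * ((x i - x₀ i) * (x i - x₀ i)) * (2 * lam)⁻¹| := one_mul _
      _ ≤ f x ^ 2 + 2 * (|f x| * ‖gradient f x‖ * R)
          + f x ^ 2 * (R * R) * (2 * lam)⁻¹ := hXb
      _ ≤ (1 + R + R * R * (2 * lam)⁻¹) * (f x ^ 2 + ‖gradient f x‖ ^ 2) := hfinal
  -- global integrability of the extended d i
  have hInd : ∀ i : Fin n, Integrable (G.indicator (d i)) volume := by
    intro i
    rw [integrable_indicator_iff hGm]
    exact Integrable.mono' (hIsum.const_mul _) (hdae i)
      ((ae_restrict_iff' hGm).2 (Filter.Eventually.of_forall (fun x hx => hdbound i x hx)))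
  -- vanishing of each component integral
  have hzero : ∀ i : Fin n, (∫ x, G.indicator (d i) x) = 0 := by
    intro i
    have hvne : (EuclideanSpace.single i (1:ℝ)) ≠ 0 := by
      intro h
      have h1 : (EuclideanSpace.single i (1:ℝ)) i = 1 := by
        simp [EuclideanSpace.single_apply]
      rw [h] at h1
      simp at h1
    apply GH.integral_lineDeriv_eq_zero hGo hGb hvne (hFcont i) ?_ ?_ ?_ (hInd i)
    · intro p hp; exact indicator_of_notMem hp _
    · intro p hp; exact indicator_of_notMem hp _
    · intro p hp
      obtain ⟨Φ, hΦ, hval⟩ := GH.exists_hasFDerivAt_Fi f x₀ hlam' i (hfd p hp)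
      have hev : G.indicator (fun y => (y i - x₀ i) * (f y * f y * w y))
          =ᶠ[𝓝 p] (fun y => (y i - x₀ i) * (f y * f y * w y)) := by
        filter_upwards [hGo.mem_nhds hp] with y hy
        exact indicator_of_mem hy (fun y => (y i - x₀ i) * (f y * f y * w y))
      have hΦ' : HasFDerivAt (G.indicator (fun y => (y i - x₀ i) * (f y * f y * w y))) Φ p :=
        hΦ.congr_of_eventuallyEq hev
      have hl := hΦ'.hasLineDerivAt (EuclideanSpace.single i 1)
      rw [← hwapp p] at hval
      rw [indicator_of_mem hp, hd_def]
      simp only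
      rw [← hval]
      exact hl
  -- summation over i
  have hsum0 : (∫ x in G, (∑ i, d i x)) = 0 := by
    rw [← integral_indicator hGm]
    have h1 : (G.indicator fun y => ∑ i, d i y) = fun y => ∑ i, G.indicator (d i) y := by
      funext y
      by_cases hy : y ∈ G
      · simp [indicator_of_mem hy]
      · simp [indicator_of_notMem hy]
    rw [h1, integral_finset_sum _ (fun i _ => hInd i)]
    exact Finset.sum_eq_zero fun i _ => hzero i
  -- the four basic integrands
  set B1 : Euc n → ℝ := fun x => w x * (f x * f x * ‖x - x₀‖ ^ 2) with hB1_def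
  set B2 : Euc n → ℝ := fun x => w x * (f x * f x) with hB2_def
  set B3 : Euc n → ℝ := fun x => w x * ‖gradient f x‖ ^ 2 with hB3_def
  set B4 : Euc n → ℝ := fun x => w x * (f x * (inner ℝ (gradient f x) (x - x₀) : ℝ)) with hB4_def
  -- identification of the summed integrand
  have hdecomp : ∀ y : Euc n, ∑ i, fderiv ℝ f y (EuclideanSpace.single i 1) * (y i - x₀ i)
      = fderiv ℝ f y (y - x₀) := by
    intro y
    have hb : ∑ i, ((y - x₀) i) • EuclideanSpace.single i (1:ℝ) = y - x₀ := by
      simpa [EuclideanSpace.basisFun_apply, EuclideanSpace.basisFun_repr] using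
        (EuclideanSpace.basisFun (Fin n) ℝ).sum_repr (y - x₀)
    conv_rhs => rw [← hb]
    rw [_root_.map_sum]
    apply Finset.sum_congr rfl
    intro i _
    rw [_root_.map_smul]
    simp only [smul_eq_mul, PiLp.sub_apply]
    ring
  have hnormsum : ∀ y : Euc n, (∑ i, ((y i - x₀ i) * (y i - x₀ i))) = ‖y - x₀‖ ^ 2 := by
    intro y
    rw [← real_inner_self_eq_norm_sq, PiLp.inner_apply]
    apply Finset.sum_congr rfl
    intro i _
    simp [RCLike.inner_apply, PiLp.sub_apply]
    ring
  have hPsplit : ∀ x : Euc n, (∑ i, d i x)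
      = (n:ℝ) * B2 x + 2 * B4 x - (2 * lam)⁻¹ * B1 x := by
    intro x
    rw [hd_def]
    simp only
    rw [← Finset.mul_sum, Finset.sum_sub_distrib, Finset.sum_add_distrib, Finset.sum_const,
      Finset.card_univ, Fintype.card_fin, nsmul_eq_mul]
    have e2 : (∑ i, 2 * f x * fderiv ℝ f x (EuclideanSpace.single i 1) * (x i - x₀ i))
        = 2 * f x * fderiv ℝ f x (x - x₀) := by
      rw [← hdecomp x, Finset.mul_sum]
      apply Finset.sum_congr rfl; intro i _; ring
    have e3 : (∑ i, f x * f x * ((x i - x₀ i) * (x i - x₀ i)) * (2 * lam)⁻¹)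
        = f x * f x * ‖x - x₀‖ ^ 2 * (2 * lam)⁻¹ := by
      have e3' : ∀ i : Fin n, f x * f x * ((x i - x₀ i) * (x i - x₀ i)) * (2 * lam)⁻¹
          = (f x * f x * (2 * lam)⁻¹) * ((x i - x₀ i) * (x i - x₀ i)) := fun i => by ring
      rw [Finset.sum_congr rfl (fun i _ => e3' i), ← Finset.mul_sum, hnormsum x]
      ring
    rw [e2, e3, hB1_def, hB2_def, hB4_def]
    simp only
    rw [← hgrad_inner]
    ring
  -- integrability of the four integrands
  have hIB1 : IntegrableOn B1 G volume := by
    apply Integrable.mono' (hIsum.const_mul (R * R))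
      ((hwc.aestronglyMeasurable).mul ((hfae.mul hfae).mul
        (((continuous_id.sub continuous_const).norm.pow 2).aestronglyMeasurable)))
    rw [ae_restrict_iff' hGm]
    apply Filter.Eventually.of_forall
    intro x hx
    have h1 : ‖x - x₀‖ ^ 2 ≤ R * R := by nlinarith [hRx x hx, norm_nonneg (x - x₀)]
    have hw0 := hwpos x
    have hw1 := hwle x
    calc ‖B1 x‖ = w x * (f x ^ 2 * ‖x - x₀‖ ^ 2) := by
          rw [hB1_def]
          simp only [Real.norm_eq_abs, abs_mul, abs_of_pos hw0, abs_mul_abs_self,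
            abs_pow, abs_norm]
          ring
      _ ≤ 1 * (f x ^ 2 * (R * R)) := by
          apply mul_le_mul hw1 (by gcongr) (by positivity) zero_le_one
      _ ≤ R * R * (f x ^ 2 + ‖gradient f x‖ ^ 2) := by
          nlinarith [sq_nonneg (f x), sq_nonneg ‖gradient f x‖, mul_nonneg hR0 hR0]
  have hIB2 : IntegrableOn B2 G volume := by
    apply Integrable.mono' hIsum ((hwc.aestronglyMeasurable).mul (hfae.mul hfae))
    rw [ae_restrict_iff' hGm]
    apply Filter.Eventually.of_forall
    intro x hx
    have hw0 := hwpos x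
    have hw1 := hwle x
    calc ‖B2 x‖ = w x * f x ^ 2 := by
          rw [hB2_def]
          simp only [Real.norm_eq_abs, abs_mul, abs_of_pos hw0, abs_mul_abs_self]
          ring
      _ ≤ 1 * f x ^ 2 := by apply mul_le_mul hw1 le_rfl (by positivity) zero_le_one
      _ ≤ f x ^ 2 + ‖gradient f x‖ ^ 2 := by nlinarith [sq_nonneg (‖gradient f x‖)]
  have hIB3 : IntegrableOn B3 G volume := by
    apply Integrable.mono' hIsum ((hwc.aestronglyMeasurable).mul (hgae.pow 2))
    rw [ae_restrict_iff' hGm]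
    apply Filter.Eventually.of_forall
    intro x hx
    have hw0 := hwpos x
    have hw1 := hwle x
    calc ‖B3 x‖ = w x * ‖gradient f x‖ ^ 2 := by
          rw [hB3_def]
          simp only [Real.norm_eq_abs, abs_mul, abs_of_pos hw0, abs_pow, abs_norm]
      _ ≤ 1 * ‖gradient f x‖ ^ 2 := by
          apply mul_le_mul hw1 le_rfl (by positivity) zero_le_one
      _ ≤ f x ^ 2 + ‖gradient f x‖ ^ 2 := by nlinarith [sq_nonneg (f x)]
  have hIB4 : IntegrableOn B4 G volume := by
    apply Integrable.mono' (hIsum.const_mul R)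
      ((hwc.aestronglyMeasurable).mul (hfae.mul
        ((hgradm.inner (measurable_id.sub measurable_const)).aestronglyMeasurable)))
    rw [ae_restrict_iff' hGm]
    apply Filter.Eventually.of_forall
    intro x hx
    have hw0 := hwpos x
    have hw1 := hwle x
    have hin : |(inner ℝ (gradient f x) (x - x₀) : ℝ)| ≤ ‖gradient f x‖ * ‖x - x₀‖ :=
      abs_real_inner_le_norm _ _
    have hinR : |(inner ℝ (gradient f x) (x - x₀) : ℝ)| ≤ ‖gradient f x‖ * R := by
      apply hin.trans
      gcongr
      exact hRx x hx
    calc ‖B4 x‖ = w x * (|f x| * |(inner ℝ (gradient f x) (x - x₀) : ℝ)|) := by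
          rw [hB4_def]
          simp only [Real.norm_eq_abs, abs_mul, abs_of_pos hw0]
      _ ≤ 1 * (|f x| * (‖gradient f x‖ * R)) := by
          apply mul_le_mul hw1 _ (by positivity) zero_le_one
          apply mul_le_mul_of_nonneg_left hinR (abs_nonneg _)
      _ ≤ R * (f x ^ 2 + ‖gradient f x‖ ^ 2) := by
          nlinarith [sq_nonneg (|f x| - ‖gradient f x‖), sq_abs (f x), abs_nonneg (f x),
            norm_nonneg (gradient f x), hR0, mul_nonneg (abs_nonneg (f x)) (norm_nonneg (gradient f x))]
  -- the divergence identity, integrated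
  have h0a : (∫ x in G, (∑ i, d i x))
      = ∫ x in G, ((n:ℝ) * B2 x + 2 * B4 x - (2 * lam)⁻¹ * B1 x) :=
    setIntegral_congr_fun hGm (fun x _ => hPsplit x)
  have h0b : (∫ x in G, ((n:ℝ) * B2 x + 2 * B4 x - (2 * lam)⁻¹ * B1 x))
      = (n:ℝ) * (∫ x in G, B2 x) + 2 * (∫ x in G, B4 x)
        - (2 * lam)⁻¹ * (∫ x in G, B1 x) := by
    have ha1 : IntegrableOn (fun x => (n:ℝ) * B2 x) G volume := hIB2.const_mul _
    have ha2 : IntegrableOn (fun x => 2 * B4 x) G volume := hIB4.const_mul _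
    have ha3 : IntegrableOn (fun x => (2 * lam)⁻¹ * B1 x) G volume := hIB1.const_mul _
    have ha12 : IntegrableOn (fun x => (n:ℝ) * B2 x + 2 * B4 x) G volume := ha1.add ha2
    rw [integral_sub ha12 ha3, integral_add ha1 ha2,
      integral_const_mul, integral_const_mul, integral_const_mul]
  have h0 : (n:ℝ) * (∫ x in G, B2 x) + 2 * (∫ x in G, B4 x)
      - (2 * lam)⁻¹ * (∫ x in G, B1 x) = 0 := by
    rw [← h0b, ← h0a]
    exact hsum0
  -- Cauchy–Schwarz / AM-GM bound on the cross term
  have hmono : (∫ x in G, 2 * B4 x) ≤ ∫ x in G, ((4 * lam)⁻¹ * B1 x + (4 * lam) * B3 x) := by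
    apply setIntegral_mono_on (hIB4.const_mul 2)
      ((hIB1.const_mul _).add (hIB3.const_mul _)) hGm
    intro x hx
    have hw0 : 0 < w x := hwpos x
    have hin : |(inner ℝ (gradient f x) (x - x₀) : ℝ)| ≤ ‖gradient f x‖ * ‖x - x₀‖ :=
      abs_real_inner_le_norm _ _
    have h4 : (4 * lam) * (4 * lam)⁻¹ = 1 := mul_inv_cancel₀ (by positivity)
    have hkey : 2 * ((|f x| * ‖x - x₀‖) * ‖gradient f x‖)
        ≤ (4 * lam)⁻¹ * (|f x| * ‖x - x₀‖) ^ 2 + 4 * lam * ‖gradient f x‖ ^ 2 := by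
      have h5 : (4 * lam) * ((4 * lam)⁻¹ * (|f x| * ‖x - x₀‖) ^ 2)
          = (|f x| * ‖x - x₀‖) ^ 2 := by
        rw [← mul_assoc, h4, one_mul]
      have key : (4 * lam) * (2 * ((|f x| * ‖x - x₀‖) * ‖gradient f x‖))
          ≤ (4 * lam) * ((4 * lam)⁻¹ * (|f x| * ‖x - x₀‖) ^ 2
            + 4 * lam * ‖gradient f x‖ ^ 2) := by
        rw [mul_add, h5]
        nlinarith [sq_nonneg ((|f x| * ‖x - x₀‖) - 4 * lam * ‖gradient f x‖)]
      exact le_of_mul_le_mul_left key (by positivity)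
    have h2 : f x * (inner ℝ (gradient f x) (x - x₀) : ℝ)
        ≤ (|f x| * ‖x - x₀‖) * ‖gradient f x‖ := by
      calc f x * (inner ℝ (gradient f x) (x - x₀) : ℝ)
          ≤ |f x * (inner ℝ (gradient f x) (x - x₀) : ℝ)| := le_abs_self _
        _ = |f x| * |(inner ℝ (gradient f x) (x - x₀) : ℝ)| := abs_mul _ _
        _ ≤ |f x| * (‖gradient f x‖ * ‖x - x₀‖) :=
            mul_le_mul_of_nonneg_left hin (abs_nonneg _)
        _ = (|f x| * ‖x - x₀‖) * ‖gradient f x‖ := by ring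
    have hs2 : (|f x| * ‖x - x₀‖) ^ 2 = f x * f x * ‖x - x₀‖ ^ 2 := by
      rw [mul_pow, sq_abs]
      ring
    calc 2 * B4 x = w x * (2 * (f x * (inner ℝ (gradient f x) (x - x₀) : ℝ))) := by
          rw [hB4_def]; ring
      _ ≤ w x * (2 * ((|f x| * ‖x - x₀‖) * ‖gradient f x‖)) := by
          apply mul_le_mul_of_nonneg_left _ hw0.le
          linarith
      _ ≤ w x * ((4 * lam)⁻¹ * (|f x| * ‖x - x₀‖) ^ 2 + 4 * lam * ‖gradient f x‖ ^ 2) :=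
          mul_le_mul_of_nonneg_left hkey hw0.le
      _ = (4 * lam)⁻¹ * B1 x + 4 * lam * B3 x := by
          rw [hB1_def, hB3_def]
          simp only
          rw [hs2]
          ring
  have hb1 : IntegrableOn (fun x => (4 * lam)⁻¹ * B1 x) G volume := hIB1.const_mul _
  have hb3 : IntegrableOn (fun x => (4 * lam) * B3 x) G volume := hIB3.const_mul _
  rw [integral_const_mul, integral_add hb1 hb3, integral_const_mul,
    integral_const_mul] at hmono
  -- rewrite the goal in terms of B1, B2, B3
  have gLHS : (∫ x in G, (‖x - x₀‖ ^ 2 / (8 * lam)) * |f x| ^ 2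
        * Real.exp (-‖x - x₀‖ ^ 2 / (4 * lam)))
      = (8 * lam)⁻¹ * ∫ x in G, B1 x := by
    rw [← integral_const_mul]
    apply setIntegral_congr_fun hGm
    intro x hx
    rw [hB1_def]
    simp only
    rw [← hwapp x, sq_abs]
    ring
  have gB3 : (∫ x in G, ‖gradient f x‖ ^ 2 * Real.exp (-‖x - x₀‖ ^ 2 / (4 * lam)))
      = ∫ x in G, B3 x := by
    apply setIntegral_congr_fun hGm
    intro x hx
    rw [hB3_def]
    simp only
    rw [← hwapp x]
    ring
  have gB2 : (∫ x in G, |f x| ^ 2 * Real.exp (-‖x - x₀‖ ^ 2 / (4 * lam)))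
      = ∫ x in G, B2 x := by
    apply setIntegral_congr_fun hGm
    intro x hx
    rw [hB2_def]
    simp only
    rw [← hwapp x, sq_abs]
    ring
  rw [gLHS, gB3, gB2]
  -- final arithmetic
  have ehalf : (2 * lam)⁻¹ * (∫ x in G, B1 x)
      = (4 * lam)⁻¹ * (∫ x in G, B1 x) + (4 * lam)⁻¹ * (∫ x in G, B1 x) := by
    have : (2 * lam)⁻¹ = (4 * lam)⁻¹ + (4 * lam)⁻¹ := by
      field_simp
      ring
    rw [this, add_mul]
  have e8 : (4 * lam)⁻¹ * (∫ x in G, B1 x)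
      = (8 * lam)⁻¹ * (∫ x in G, B1 x) + (8 * lam)⁻¹ * (∫ x in G, B1 x) := by
    have : (4 * lam)⁻¹ = (8 * lam)⁻¹ + (8 * lam)⁻¹ := by
      field_simp
      ring
    rw [this, add_mul]
  have en : (n:ℝ) * (∫ x in G, B2 x)
      = (n:ℝ) / 2 * (∫ x in G, B2 x) + (n:ℝ) / 2 * (∫ x in G, B2 x) := by ring
  have e4 : 4 * lam * (∫ x in G, B3 x)
      = 2 * lam * (∫ x in G, B3 x) + 2 * lam * (∫ x in G, B3 x) := by ring
  linarith
end
end
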